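/- Let w be an element of S_Z and let T be an increasing tableau of partition shape with at most n rows such that revrow(T) is in R(w). Let RF_n(T) be the set of a = (a^1,...,a^n) in RF_n(w) whose concatenation a^1a^2...a^n is Coxeter–Knuth equivalent to revrow(T). Then the factorization a in which a^i is the reversal of row i of T (and a^i is empty for i greater than the number of rows of T) belongs to RF_n(T), and it is the unique element of RF_n(T) satisfying e_i(a) = 0 for all i in {1,...,n-1}. -/

import Mathlib

open MvPolynomial

/-! ### Permutations of ℤ, reduced words -/

/-- The simple transposition `s_i = (i, i+1)` of `ℤ`. -/
def sT (i : ℤ) : Equiv.Perm ℤ := Equiv.swap i (i + 1)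

/-- The product `s_{i_1} s_{i_2} ⋯ s_{i_l}` of the simple transpositions indexed by a word. -/
def wordProd (l : List ℤ) : Equiv.Perm ℤ := (l.map sT).prod

/-- `S_ℤ`: the subgroup of permutations of `ℤ` generated by the simple transpositions. -/
def SZSet : Set (Equiv.Perm ℤ) := {w | ∃ l : List ℤ, wordProd l = w}

/-- `S_∞`: the subgroup generated by `s_i` for `i ≥ 1`. -/
def SinftySet : Set (Equiv.Perm ℤ) :=
  {w | ∃ l : List ℤ, (∀ i ∈ l, 1 ≤ i) ∧ wordProd l = w}

/-- `S_n`: the subgroup generated by `s_i` for `1 ≤ i ≤ n-1`. -/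
def SnSet (n : ℕ) : Set (Equiv.Perm ℤ) :=
  {w | ∃ l : List ℤ, (∀ i ∈ l, 1 ≤ i ∧ i < n) ∧ wordProd l = w}

/-- A reduced word for `w`: a minimal length word whose product is `w`. -/
def IsReducedWord (w : Equiv.Perm ℤ) (l : List ℤ) : Prop :=
  wordProd l = w ∧ ∀ m : List ℤ, wordProd m = w → l.length ≤ m.length

/-- The Coxeter length of `w` (the length of any reduced word for `w`). -/
noncomputable def lenOf (w : Equiv.Perm ℤ) : ℕ :=
  sInf {m | ∃ l : List ℤ, wordProd l = w ∧ l.length = m}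

/-- The inversion set `Inv(w) = {(a,b) : a < b, w(a) > w(b)}`. -/
def InvSet (w : Equiv.Perm ℤ) : Set (ℤ × ℤ) := {p | p.1 < p.2 ∧ w p.2 < w p.1}

/-- The Lehmer code `c_i(w) = #{j : i < j, w(i) > w(j)}`. -/
noncomputable def codeOf (w : Equiv.Perm ℤ) (i : ℤ) : ℕ := {j : ℤ | i < j ∧ w j < w i}.ncard

/-- The Rothe diagram `D(w) = {(i, w(j)) : i < j, w(i) > w(j)}`. -/
def RotheD (w : Equiv.Perm ℤ) : Set (ℤ × ℤ) :=
  {p | ∃ j : ℤ, p.1 < j ∧ w j < w p.1 ∧ p.2 = w j}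

/-! ### Primed letters and primed words -/

/-- A primed letter: `(x, false)` denotes the integer `x`, `(x, true)` denotes `x' = x - 1/2`. -/
abbrev PLetter := ℤ × Bool

/-- Twice the value of a primed letter (so that comparisons agree with `1' < 1 < 2' < 2 < ⋯`). -/
def pval (p : PLetter) : ℤ := 2 * p.1 - (if p.2 then 1 else 0)

/-- A strictly decreasing primed word. -/
def PDec (l : List PLetter) : Prop := l.Pairwise (fun p q => pval q < pval p)

/-- A strictly decreasing integer word. -/
def ZDec (l : List ℤ) : Prop := l.Pairwise (fun x y => y < x)

/-- Remove the primes from a primed word (the "ceiling"). -/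
def unprimeW (l : List PLetter) : List ℤ := l.map Prod.fst

/-- Membership in `R⁺(w)`: a primed word whose unprimed form is a reduced word for `w`. -/
def IsPrimedReducedWord (w : Equiv.Perm ℤ) (l : List PLetter) : Prop :=
  IsReducedWord w (unprimeW l)

/-- The set `Marked(i)` of marked inversions of a primed word. -/
def markedSet (l : List PLetter) : Set (ℤ × ℤ) :=
  {p | ∃ j : Fin l.length, (l.get j).2 = true ∧
        p.1 = wordProd ((l.drop ((j : ℕ) + 1)).reverse.map Prod.fst) (l.get j).1 ∧
        p.2 = wordProd ((l.drop ((j : ℕ) + 1)).reverse.map Prod.fst) ((l.get j).1 + 1)}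

/-! ### Factorizations (as sequences of factors) -/

/-- The concatenation of the first `N` factors of a factorization. -/
def concatP (a : ℕ → List PLetter) (N : ℕ) : List PLetter := ((List.range N).map a).flatten

/-- The concatenation of the first `N` factors of an unprimed factorization. -/
def concatZ (a : ℕ → List ℤ) (N : ℕ) : List ℤ := ((List.range N).map a).flatten

/-- `RF⁺(w, A)`: decreasing primed reduced factorizations of `w` with marked set `A`
(all but finitely many factors empty). -/
def RFplus (w : Equiv.Perm ℤ) (A : Set (ℤ × ℤ)) : Set (ℕ → List PLetter) :=
  {a | (∀ i, PDec (a i)) ∧ ∃ N : ℕ, (∀ m, N ≤ m → a m = []) ∧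
        IsPrimedReducedWord w (concatP a N) ∧ markedSet (concatP a N) = A}

/-- `RF⁺_n(w, A)`: elements of `RF⁺(w, A)` with all factors beyond the first `n` empty. -/
def RFplusN (n : ℕ) (w : Equiv.Perm ℤ) (A : Set (ℤ × ℤ)) : Set (ℕ → List PLetter) :=
  {a | (∀ i, PDec (a i)) ∧ (∀ m, n ≤ m → a m = []) ∧
        IsPrimedReducedWord w (concatP a n) ∧ markedSet (concatP a n) = A}

/-- `RF_n(w)`: unprimed decreasing reduced factorizations of `w` into at most `n` factors. -/
def RFZn (n : ℕ) (w : Equiv.Perm ℤ) : Set (ℕ → List ℤ) :=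
  {a | (∀ i, ZDec (a i)) ∧ (∀ m, n ≤ m → a m = []) ∧ IsReducedWord w (concatZ a n)}

/-- Removing the primes from each factor of a primed factorization. -/
def unprimeF (a : ℕ → List PLetter) : ℕ → List ℤ := fun m => unprimeW (a m)

/-! ### The pairing procedure and crystal operators (primed version) -/

/-- Find the first letter `b` in the (decreasing) list with `⌈b⌉ < c`, removing it. -/
def findPairP (c : ℤ) : List PLetter → Option PLetter × List PLetter
  | [] => (none, [])
  | b :: rest =>
      if b.1 < c then (some b, rest)
      else
        let r := findPairP c rest
        (r.1, b :: r.2)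

/-- Iterate the pairing over the letters of `v` from right to left. -/
def pairFoldP (u : List PLetter) (vrev : List PLetter) :
    List (PLetter × PLetter) × List PLetter :=
  vrev.foldl (fun st c =>
    match findPairP c.1 st.2 with
    | (none, r) => (st.1, r)
    | (some b, r) => ((b, c) :: st.1, r)) ([], u)

/-- The set `pair(u, v)` of paired letters, as a list of pairs. -/
def pairsP (u v : List PLetter) : List (PLetter × PLetter) := (pairFoldP u v.reverse).1

/-- The unpaired letters of `v` (in decreasing order). -/
def unpairedSnd (u v : List PLetter) : List PLetter :=
  v.filter fun c => decide (c ∉ (pairsP u v).map Prod.snd)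

/-- The unpaired letters of `u` (in decreasing order). -/
def unpairedFst (u v : List PLetter) : List PLetter :=
  u.filter fun b => decide (b ∉ (pairsP u v).map Prod.fst)

theorem exists_add_not_mem (L : List ℤ) (x : ℤ) : ∃ q : ℕ, x + q ∉ L := by
  have h : ∃ q : ℕ, ∀ y ∈ L, y < x + q := by
    induction L with
    | nil => exact ⟨1, by simp⟩
    | cons a t ih =>
      obtain ⟨q, hq⟩ := ih
      refine ⟨q + (a - x).toNat + 1, ?_⟩
      intro y hy
      rcases List.mem_cons.mp hy with rfl | h
      · push_cast; omega
      · have := hq y h; push_cast; omega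
  obtain ⟨q, hq⟩ := h
  exact ⟨q, fun hmem => lt_irrefl _ (hq _ hmem)⟩

theorem exists_sub_not_mem (L : List ℤ) (x : ℤ) : ∃ q : ℕ, x - q ∉ L := by
  have h : ∃ q : ℕ, ∀ y ∈ L, x - q < y := by
    induction L with
    | nil => exact ⟨1, by simp⟩
    | cons a t ih =>
      obtain ⟨q, hq⟩ := ih
      refine ⟨q + (x - a).toNat + 1, ?_⟩
      intro y hy
      rcases List.mem_cons.mp hy with rfl | h
      · push_cast; omega
      · have := hq y h; push_cast; omega
  obtain ⟨q, hq⟩ := h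
  exact ⟨q, fun hmem => lt_irrefl _ (hq _ hmem)⟩

/-- The minimal `q ∈ ℕ` with `x + q ∉ L`. -/
def qUp (L : List ℤ) (x : ℤ) : ℕ := Nat.find (exists_add_not_mem L x)

/-- The minimal `q ∈ ℕ` with `x - q ∉ L`. -/
def qDown (L : List ℤ) (x : ℤ) : ℕ := Nat.find (exists_sub_not_mem L x)

/-- Reverse the prime on a primed letter. -/
def toggleP (p : PLetter) : PLetter := (p.1, !p.2)

/-- Toggle the prime on the occurrence of the letter `p` in a primed word. -/
def toggleIn (l : List PLetter) (p : PLetter) : List PLetter :=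
  l.map fun q => if q = p then toggleP q else q

/-- Swap the primes on a pair `(b, c)` with `b` in the first word and `c` in the second:
reverse both primes when exactly one of the two letters is primed. -/
def swapPairIn (uv : List PLetter × List PLetter) (bc : PLetter × PLetter) :
    List PLetter × List PLetter :=
  if bc.1.2 = bc.2.2 then uv else (toggleIn uv.1 bc.1, toggleIn uv.2 bc.2)

/-- Insert a letter into a decreasing primed word at the correct position. -/
def insertDecP (p : PLetter) : List PLetter → List PLetter
  | [] => [p]
  | q :: t => if pval q < pval p then p :: q :: t else q :: insertDecP p t

/-- The raising crystal operator acting on a consecutive pair of factors (primed version). -/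
def eStepP (u v : List PLetter) : Option (List PLetter × List PLetter) :=
  match unpairedSnd u v with
  | [] => none
  | x :: _ =>
    let q : ℕ := qUp (unprimeW u) x.1
    let toSwap := (pairsP u v).filter fun bc => decide (x.1 < bc.2.1 ∧ bc.2.1 ≤ x.1 + q)
    some (toSwap.foldl swapPairIn (insertDecP (x.1 + q, x.2) u, v.erase x))

/-- The lowering crystal operator acting on a consecutive pair of factors (primed version). -/
def fStepP (u v : List PLetter) : Option (List PLetter × List PLetter) :=
  match (unpairedFst u v).getLast? with
  | none => none
  | some y =>
    let q : ℕ := qDown (unprimeW v) y.1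
    let toSwap := (pairsP u v).filter fun bc => decide (y.1 - q ≤ bc.1.1 ∧ bc.1.1 < y.1)
    some (toSwap.foldl swapPairIn (u.erase y, insertDecP (y.1 - q, y.2) v))

/-- Apply a two-factor operator at position `(i, i+1)` of a factorization. -/
def applyAtP (g : List PLetter → List PLetter → Option (List PLetter × List PLetter))
    (i : ℕ) (a : ℕ → List PLetter) : Option (ℕ → List PLetter) :=
  (g (a i) (a (i + 1))).map fun uv =>
    Function.update (Function.update a i uv.1) (i + 1) uv.2

/-- The crystal operator `e` on primed factorizations acting on factors `i, i+1` (0-indexed). -/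
def eP (i : ℕ) (a : ℕ → List PLetter) : Option (ℕ → List PLetter) := applyAtP eStepP i a

/-- The crystal operator `f` on primed factorizations acting on factors `i, i+1` (0-indexed). -/
def fP (i : ℕ) (a : ℕ → List PLetter) : Option (ℕ → List PLetter) := applyAtP fStepP i a

/-! ### Crystal operators (unprimed version) -/

def findPairZ (c : ℤ) : List ℤ → Option ℤ × List ℤ
  | [] => (none, [])
  | b :: rest =>
      if b < c then (some b, rest)
      else
        let r := findPairZ c rest
        (r.1, b :: r.2)

def pairFoldZ (u : List ℤ) (vrev : List ℤ) : List (ℤ × ℤ) × List ℤ :=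
  vrev.foldl (fun st c =>
    match findPairZ c st.2 with
    | (none, r) => (st.1, r)
    | (some b, r) => ((b, c) :: st.1, r)) ([], u)

/-- The set `pair(u, v)` for integer words. -/
def pairsZ (u v : List ℤ) : List (ℤ × ℤ) := (pairFoldZ u v.reverse).1

def insertDecZ (x : ℤ) : List ℤ → List ℤ
  | [] => [x]
  | q :: t => if q < x then x :: q :: t else q :: insertDecZ x t

/-- The raising crystal operator on a consecutive pair of integer factors. -/
def eStepZ (u v : List ℤ) : Option (List ℤ × List ℤ) :=
  match v.filter (fun c => decide (c ∉ (pairsZ u v).map Prod.snd)) with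
  | [] => none
  | x :: _ =>
    let q : ℕ := qUp u x
    some (insertDecZ (x + q) u, v.erase x)

/-- The lowering crystal operator on a consecutive pair of integer factors. -/
def fStepZ (u v : List ℤ) : Option (List ℤ × List ℤ) :=
  match (u.filter (fun b => decide (b ∉ (pairsZ u v).map Prod.fst))).getLast? with
  | none => none
  | some y =>
    let q : ℕ := qDown v y
    some (u.erase y, insertDecZ (y - q) v)

def applyAtZ (g : List ℤ → List ℤ → Option (List ℤ × List ℤ))
    (i : ℕ) (a : ℕ → List ℤ) : Option (ℕ → List ℤ) :=
  (g (a i) (a (i + 1))).map fun uv =>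
    Function.update (Function.update a i uv.1) (i + 1) uv.2

/-- The crystal operator `e` acting on factors `i, i+1` (0-indexed) of an integer factorization,
so that `eZ i` is the paper's `e_{i+1}`. -/
def eZ (i : ℕ) (a : ℕ → List ℤ) : Option (ℕ → List ℤ) := applyAtZ eStepZ i a

/-- The crystal operator `f` acting on factors `i, i+1` (0-indexed). -/
def fZ (i : ℕ) (a : ℕ → List ℤ) : Option (ℕ → List ℤ) := applyAtZ fStepZ i a

/-! ### Coxeter–Knuth equivalence and tableaux -/

/-- One elementary Coxeter–Knuth move. -/
inductive CKStep : List ℤ → List ℤ → Prop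
  | acb (u v : List ℤ) {a b c : ℤ} (h1 : a < b) (h2 : b < c) :
      CKStep (u ++ a :: c :: b :: v) (u ++ c :: a :: b :: v)
  | bca (u v : List ℤ) {a b c : ℤ} (h1 : a < b) (h2 : b < c) :
      CKStep (u ++ b :: c :: a :: v) (u ++ b :: a :: c :: v)
  | braid (u v : List ℤ) {a b : ℤ} (h : b = a + 1 ∨ b = a - 1) :
      CKStep (u ++ a :: b :: a :: v) (u ++ b :: a :: b :: v)

/-- Coxeter–Knuth equivalence. -/
def CKEquiv : List ℤ → List ℤ → Prop := Relation.EqvGen CKStep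

/-- A tableau is recorded as its list of rows; its shape is the list of row lengths. -/
def shapeOf (T : List (List ℤ)) : List ℕ := T.map List.length

/-- The row reading word: rows left to right, starting with the last row. -/
def rowword (T : List (List ℤ)) : List ℤ := T.reverse.flatten

/-- The reverse row reading word. -/
def revrow (T : List (List ℤ)) : List ℤ := (rowword T).reverse

/-- The entry of `T` in row `i`, position `j` within the row (both 0-indexed). -/
def entryOf (T : List (List ℤ)) (i j : ℕ) : ℤ := (T.getD i []).getD j 0

/-- `T` has partition shape: rows nonempty with weakly decreasing lengths. -/
def IsPartShape (T : List (List ℤ)) : Prop :=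
  (∀ r ∈ T, r ≠ []) ∧ ∀ i, i + 1 < T.length → (T.getD (i + 1) []).length ≤ (T.getD i []).length

/-- An increasing tableau of partition shape. -/
def IncrTab (T : List (List ℤ)) : Prop :=
  IsPartShape T ∧ (∀ r ∈ T, r.Pairwise (· < ·)) ∧
  ∀ i j, i + 1 < T.length → j < (T.getD (i + 1) []).length → entryOf T i j < entryOf T (i + 1) j

/-- A decreasing tableau of partition shape. -/
def DecrTab (T : List (List ℤ)) : Prop :=
  IsPartShape T ∧ (∀ r ∈ T, r.Pairwise (fun x y => y < x)) ∧
  ∀ i j, i + 1 < T.length → j < (T.getD (i + 1) []).length → entryOf T (i + 1) j < entryOf T i j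

/-! ### Shifted tableaux -/

/-- Strict partition shape: rows nonempty with strictly decreasing lengths.  Row `i`
(0-indexed) of a shifted tableau occupies columns `i, i+1, …`. -/
def IsStrictShape (T : List (List ℤ)) : Prop :=
  (∀ r ∈ T, r ≠ []) ∧ ∀ i, i + 1 < T.length → (T.getD (i + 1) []).length < (T.getD i []).length

/-- An increasing shifted tableau: rows and columns strictly increase.  In row-list
coordinates, the entry of row `i+1` in within-row position `j` lies in the same column as the
entry of row `i` in within-row position `j+1`. -/
def ShIncrTab (T : List (List ℤ)) : Prop :=
  IsStrictShape T ∧ (∀ r ∈ T, r.Pairwise (· < ·)) ∧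
  ∀ i j, i + 1 < T.length → j < (T.getD (i + 1) []).length →
    entryOf T i (j + 1) < entryOf T (i + 1) j

/-- A decreasing shifted tableau. -/
def ShDecrTab (T : List (List ℤ)) : Prop :=
  IsStrictShape T ∧ (∀ r ∈ T, r.Pairwise (fun x y => y < x)) ∧
  ∀ i j, i + 1 < T.length → j < (T.getD (i + 1) []).length →
    entryOf T (i + 1) j < entryOf T i (j + 1)

/-! ### Young diagrams of partitions given as lists -/

/-- The Young diagram of a partition given as a list of row lengths (1-indexed positions). -/
def YDiagL (lam : List ℕ) : Set (ℤ × ℤ) :=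
  {p | 1 ≤ p.1 ∧ 1 ≤ p.2 ∧ p.2 ≤ (lam.getD (p.1 - 1).toNat 0 : ℤ)}

/-- The tableau `T_λ` with entry `i + j - 1` in each box `(i, j)` of `D_λ` (1-indexed). -/
def Tlam (lam : List ℕ) : List (List ℤ) :=
  lam.mapIdx fun i k => (List.range k).map fun j => ((i + j + 1 : ℕ) : ℤ)

/-! ### Fixed-point-free involutions -/

def fpfFun (i : ℤ) : ℤ := if Even i then i - 1 else i + 1

theorem fpfFun_involutive : Function.Involutive fpfFun := by
  intro i
  simp only [fpfFun, Int.even_iff]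
  split <;> split <;> omega

/-- The fixed-point-free involution `1_fpf : i ↦ i - (-1)^i`. -/
def onefpf : Equiv.Perm ℤ :=
  ⟨fpfFun, fpfFun, fpfFun_involutive, fpfFun_involutive⟩

/-- `I^fpf_ℤ`: the `S_ℤ`-conjugation orbit of `1_fpf`. -/
def IfpfZ : Set (Equiv.Perm ℤ) := {z | ∃ w ∈ SZSet, z = w⁻¹ * onefpf * w}

/-- `I^fpf_∞`: the `S_∞`-conjugation orbit of `1_fpf`. -/
def IfpfInfty : Set (Equiv.Perm ℤ) := {z | ∃ w ∈ SinftySet, z = w⁻¹ * onefpf * w}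

/-- `𝒜^Sp(z)`: minimal-length `w ∈ S_ℤ` with `z = w⁻¹ 1_fpf w`. -/
def ASp (z : Equiv.Perm ℤ) : Set (Equiv.Perm ℤ) :=
  {w | w ∈ SZSet ∧ z = w⁻¹ * onefpf * w ∧
       ∀ v ∈ SZSet, z = v⁻¹ * onefpf * v → lenOf w ≤ lenOf v}

/-- `R^Sp(z)`: the set of fpf-involution words for `z`. -/
def RSp (z : Equiv.Perm ℤ) : Set (List ℤ) := {l | ∃ w ∈ ASp z, IsReducedWord w l}

/-- The fpf-involution code `c^Sp_i(z)`. -/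
noncomputable def cSp (z : Equiv.Perm ℤ) (i : ℤ) : ℕ :=
  {j : ℤ | i < j ∧ z j < min i (z i)}.ncard

/-- `RF^Sp_n(z)`: symplectic reduced factorizations into at most `n` decreasing factors. -/
def RFSp (n : ℕ) (z : Equiv.Perm ℤ) : Set (ℕ → List ℤ) :=
  {a | (∀ i, ZDec (a i)) ∧ (∀ m, n ≤ m → a m = []) ∧ concatZ a n ∈ RSp z}

/-- `BRF^Sp_n(z)`: the bounded (by the standard flag) symplectic reduced factorizations:
every letter `m` of the factor in (0-indexed) position `i` satisfies `m ≥ i + 1`. -/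
def BRFSp (n : ℕ) (z : Equiv.Perm ℤ) : Set (ℕ → List ℤ) :=
  {a | a ∈ RFSp n z ∧ ∀ m, ∀ x ∈ a m, (m : ℤ) + 1 ≤ x}

/-! ### Symplectic Coxeter–Knuth equivalence -/

/-- The extra symplectic relations, affecting the first two letters. -/
inductive SpExtra : List ℤ → List ℤ → Prop
  | down (a : ℤ) (t : List ℤ) : SpExtra (a :: (a - 1) :: t) (a :: (a + 1) :: t)
  | comm (a b : ℤ) (t : List ℤ) (h : a % 2 = b % 2) : SpExtra (a :: b :: t) (b :: a :: t)

/-- Symplectic Coxeter–Knuth equivalence. -/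
def SpCKEquiv : List ℤ → List ℤ → Prop :=
  Relation.EqvGen (fun x y => CKStep x y ∨ SpExtra x y)

/-- `half_<(λ)` for a partition given as a list: positive values among `λ_i - i`. -/
def halfLtL (lam : List ℕ) : List ℕ :=
  ((List.range lam.length).map fun k => ((lam.getD k 0 : ℤ) - (k + 1)).toNat).filter
    fun m => decide (0 < m)

/-- The shifted tableau `T^Sp_λ` of shape `half_<(λ)` with entry `i + j` in box `(i,j) ∈ SD_μ`. -/
def TSpTab (lam : List ℕ) : List (List ℤ) :=
  (halfLtL lam).mapIdx fun k m => (List.range m).map fun t => ((2 * (k + 1) + t : ℕ) : ℤ)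

/-- Symmetric partition (list version): the diagram is invariant under transposition. -/
def SymmPartL (lam : List ℕ) : Prop :=
  ∀ p : ℤ × ℤ, p ∈ YDiagL lam ↔ (p.2, p.1) ∈ YDiagL lam

/-- Skew-symmetric partition (list version). -/
def SkewSymmPartL (lam : List ℕ) : Prop :=
  SymmPartL lam ∧ ∀ i : ℤ, (i, i) ∈ YDiagL lam → (i + 1, i + 1) ∉ YDiagL lam →
    (¬ ∃ mu : List ℕ, mu.Pairwise (· ≥ ·) ∧ YDiagL mu = YDiagL lam ∪ {(i, i + 1)} ∧
        YDiagL mu ≠ YDiagL lam) ∧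
    (¬ ∃ mu : List ℕ, mu.Pairwise (· ≥ ·) ∧ YDiagL mu = YDiagL lam \ {(i, i + 1)} ∧
        YDiagL mu ≠ YDiagL lam)

/-! ### Demazure product, orthogonal involution words -/

/-- One step of the Demazure product: multiply by `s_i` on the left if this increases length. -/
noncomputable def demStep (i : ℤ) (x : Equiv.Perm ℤ) : Equiv.Perm ℤ :=
  if lenOf x < lenOf (sT i * x) then sT i * x else x

/-- The Demazure product of the letters of a word. -/
noncomputable def demWordProd (l : List ℤ) : Equiv.Perm ℤ := l.foldr demStep 1

/-- `𝒜^O(z)`: minimal-length `w` with `z = w⁻¹ ∘ w` (Demazure product). -/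
def AO (z : Equiv.Perm ℤ) : Set (Equiv.Perm ℤ) :=
  {w | (∃ l : List ℤ, IsReducedWord w l ∧ demWordProd (l.reverse ++ l) = z) ∧
       ∀ v : Equiv.Perm ℤ, (∃ l : List ℤ, IsReducedWord v l ∧ demWordProd (l.reverse ++ l) = z) →
         lenOf w ≤ lenOf v}

/-- `Cyc(z) = {(a, b) : a < b = z(a)}`. -/
def CycSet (z : Equiv.Perm ℤ) : Set (ℤ × ℤ) := {p | p.1 < p.2 ∧ z p.1 = p.2}

/-- `R^O(z)`: the set of primed involution words for `z`. -/
def RO (z : Equiv.Perm ℤ) : Set (List PLetter) :=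
  {l | ∃ A ⊆ CycSet z, ∃ w ∈ AO z, IsPrimedReducedWord w l ∧ markedSet l = A}

/-- The involution code `c^O_i(z)`. -/
noncomputable def cO (z : Equiv.Perm ℤ) (i : ℤ) : ℕ :=
  {j : ℤ | i < j ∧ z j ≤ min i (z i)}.ncard

/-- `RF^O_n(z)`: orthogonal (primed) reduced factorizations into at most `n` factors. -/
def RFO (n : ℕ) (z : Equiv.Perm ℤ) : Set (ℕ → List PLetter) :=
  {a | (∀ i, PDec (a i)) ∧ (∀ m, n ≤ m → a m = []) ∧ concatP a n ∈ RO z}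

/-- The unprimed image `uRF^O_n(z)` of `RF^O_n(z)`. -/
def uRFO (n : ℕ) (z : Equiv.Perm ℤ) : Set (ℕ → List ℤ) := unprimeF '' RFO n z

/-! ### Primed and orthogonal Coxeter–Knuth equivalence -/

/-- One elementary primed Coxeter–Knuth move. -/
inductive PCKStep : List PLetter → List PLetter → Prop
  | swapACB (u v : List PLetter) {A B C : PLetter} (h1 : A.1 < B.1) (h2 : B.1 < C.1) :
      PCKStep (u ++ A :: C :: B :: v) (u ++ C :: A :: B :: v)
  | swapBCA (u v : List PLetter) {A B C : PLetter} (h1 : A.1 < B.1) (h2 : B.1 < C.1) :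
      PCKStep (u ++ B :: C :: A :: v) (u ++ B :: A :: C :: v)
  | braid00 (u v : List PLetter) {a b : ℤ} (h : b = a + 1 ∨ b = a - 1) :
      PCKStep (u ++ (a, false) :: (b, false) :: (a, false) :: v)
              (u ++ (b, false) :: (a, false) :: (b, false) :: v)
  | braid11 (u v : List PLetter) {a b : ℤ} (h : b = a + 1 ∨ b = a - 1) :
      PCKStep (u ++ (a, true) :: (b, true) :: (a, true) :: v)
              (u ++ (b, true) :: (a, true) :: (b, true) :: v)
  | mixA (u v : List PLetter) {a b : ℤ} (h : b = a + 1 ∨ b = a - 1) :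
      PCKStep (u ++ (a, true) :: (b, false) :: (a, false) :: v)
              (u ++ (b, false) :: (a, false) :: (b, true) :: v)
  | mixB (u v : List PLetter) {a b : ℤ} (h : b = a + 1 ∨ b = a - 1) :
      PCKStep (u ++ (a, false) :: (b, true) :: (a, false) :: v)
              (u ++ (b, false) :: (a, true) :: (b, false) :: v)
  | mixC (u v : List PLetter) {a b : ℤ} (h : b = a + 1 ∨ b = a - 1) :
      PCKStep (u ++ (a, true) :: (b, true) :: (a, false) :: v)
              (u ++ (b, false) :: (a, true) :: (b, true) :: v)
  | mixD (u v : List PLetter) {a b : ℤ} (h : b = a + 1 ∨ b = a - 1) :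
      PCKStep (u ++ (a, true) :: (b, false) :: (a, true) :: v)
              (u ++ (b, true) :: (a, false) :: (b, true) :: v)

/-- The extra orthogonal relations, affecting the first letters of words. -/
inductive OExtra : List PLetter → List PLetter → Prop
  | prime (a : ℤ) (w : List PLetter) : OExtra ((a, false) :: w) ((a, true) :: w)
  | comm00 (a b : ℤ) (w : List PLetter) :
      OExtra ((a, false) :: (b, false) :: w) ((b, false) :: (a, false) :: w)
  | comm01 (a b : ℤ) (w : List PLetter) :
      OExtra ((a, false) :: (b, true) :: w) ((b, false) :: (a, true) :: w)
  | comm10 (a b : ℤ) (w : List PLetter) :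
      OExtra ((a, true) :: (b, false) :: w) ((b, true) :: (a, false) :: w)
  | comm11 (a b : ℤ) (w : List PLetter) :
      OExtra ((a, true) :: (b, true) :: w) ((b, true) :: (a, true) :: w)

/-- Orthogonal Coxeter–Knuth equivalence. -/
def OCKEquiv : List PLetter → List PLetter → Prop :=
  Relation.EqvGen (fun x y => PCKStep x y ∨ OExtra x y)

/-- Increasing shifted tableau with primed entries: removing the primes yields an increasing
shifted tableau. -/
def ShIncrTabP (T : List (List PLetter)) : Prop := ShIncrTab (T.map unprimeW)

/-- Decreasing shifted tableau with primed entries. -/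
def ShDecrTabP (T : List (List PLetter)) : Prop := ShDecrTab (T.map unprimeW)

/-- No primed entries on the main diagonal (the first entry of each row). -/
def DiagUnprimed (T : List (List PLetter)) : Prop :=
  ∀ r ∈ T, ∀ p : PLetter, r.head? = some p → p.2 = false

/-- The row reading word of a primed shifted tableau. -/
def rowwordP (T : List (List PLetter)) : List PLetter := T.reverse.flatten

/-- The shape of a primed tableau. -/
def shapeOfP (T : List (List PLetter)) : List ℕ := T.map List.length

/-! ### Iterated partial operators -/

def iterOpt {α : Type*} (g : α → Option α) : ℕ → α → Option α
  | 0, a => some a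
  | m + 1, a => (g a).bind (iterOpt g m)

/-! ### Weak compositions as functions `ℤ → ℕ` supported on positive integers -/

/-- A weak composition: nonnegative entries indexed by positive integers, finitely supported. -/
def WeakCompF (α : ℤ → ℕ) : Prop :=
  (∀ i ≤ 0, α i = 0) ∧ ∃ N : ℤ, ∀ i, N ≤ i → α i = 0

/-- A partition: a weakly decreasing weak composition. -/
def IsPartitionFun (lam : ℤ → ℕ) : Prop :=
  WeakCompF lam ∧ ∀ i : ℤ, 1 ≤ i → lam (i + 1) ≤ lam i

/-- `lam` is the decreasing rearrangement `λ(α)` of `α`: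
it is a partition with the same part multiplicities. -/
def IsDecRearr (α lam : ℤ → ℕ) : Prop :=
  IsPartitionFun lam ∧ ∀ k : ℕ, 0 < k →
    {i : ℤ | 1 ≤ i ∧ k ≤ α i}.ncard = {i : ℤ | 1 ≤ i ∧ k ≤ lam i}.ncard

/-- The Young diagram of a partition function (1-indexed positions). -/
def YDiag (lam : ℤ → ℕ) : Set (ℤ × ℤ) :=
  {p | 1 ≤ p.1 ∧ 1 ≤ p.2 ∧ p.2 ≤ (lam p.1 : ℤ)}

/-- Symmetric partition: diagram invariant under transposition. -/
def SymmPartF (lam : ℤ → ℕ) : Prop :=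
  IsPartitionFun lam ∧ ∀ p : ℤ × ℤ, p ∈ YDiag lam ↔ (p.2, p.1) ∈ YDiag lam

/-- Skew-symmetric partition. -/
def SkewSymmPartF (lam : ℤ → ℕ) : Prop :=
  SymmPartF lam ∧ ∀ i : ℤ, (i, i) ∈ YDiag lam → (i + 1, i + 1) ∉ YDiag lam →
    (¬ ∃ mu : ℤ → ℕ, IsPartitionFun mu ∧ YDiag mu = YDiag lam ∪ {(i, i + 1)} ∧
        YDiag mu ≠ YDiag lam) ∧
    (¬ ∃ mu : ℤ → ℕ, IsPartitionFun mu ∧ YDiag mu = YDiag lam \ {(i, i + 1)} ∧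
        YDiag mu ≠ YDiag lam)

/-- The Demazure action of a simple transposition on weak compositions:
sort the entries in positions `i, i+1` into weakly increasing order. -/
def sComp (i : ℤ) (β : ℤ → ℕ) : ℤ → ℕ :=
  if β (i + 1) < β i then
    (fun j => if j = i then β (i + 1) else if j = i + 1 then β i else β j)
  else β

/-- The Demazure action of a word on a weak composition (rightmost letter acts first). -/
def demCompAct (l : List ℤ) (β : ℤ → ℕ) : ℤ → ℕ := l.foldr sComp β

/-- `u = u(α)`: the minimal-length permutation with `α = u ∘ λ(α)` under the Demazure action. -/
def IsUofAlpha (α lam : ℤ → ℕ) (u : Equiv.Perm ℤ) : Prop :=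
  u ∈ SinftySet ∧ (∃ l : List ℤ, IsReducedWord u l ∧ demCompAct l lam = α) ∧
  ∀ v ∈ SinftySet, (∃ l : List ℤ, IsReducedWord v l ∧ demCompAct l lam = α) → lenOf u ≤ lenOf v

/-! ### Isobaric divided differences, Schubert polynomials -/

/-- `g = π_i f`, i.e. `(x_i - x_{i+1}) g = x_i f - x_{i+1} (s_i f)`. -/
def IsPiApply (i : ℤ) (f g : MvPolynomial ℤ ℤ) : Prop :=
  (X i - X (i + 1)) * g = X i * f - X (i + 1) * MvPolynomial.rename (sT i) f

/-- `g = π_{i_1} π_{i_2} ⋯ π_{i_k} f` for the word `l = [i_1, …, i_k]`. -/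
inductive IsPiWord : List ℤ → MvPolynomial ℤ ℤ → MvPolynomial ℤ ℤ → Prop
  | nil (f : MvPolynomial ℤ ℤ) : IsPiWord [] f f
  | cons (i : ℤ) (t : List ℤ) (f h g : MvPolynomial ℤ ℤ) :
      IsPiWord t f h → IsPiApply i h g → IsPiWord (i :: t) f g

/-- The dominant monomial `x^λ = ∏_{k=1}^{M} x_k^{λ_k}`. -/
noncomputable def xpow (lam : ℤ → ℕ) (M : ℕ) : MvPolynomial ℤ ℤ :=
  ∏ k ∈ Finset.range M, (X ((k : ℤ) + 1) : MvPolynomial ℤ ℤ) ^ lam ((k : ℤ) + 1)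

/-- The defining axioms of the family of Schubert polynomials `{𝔖_w}_{w ∈ S_∞}`:
`𝔖_w = x^λ` for `w` dominant of shape `λ`, and
`∂_i 𝔖_w = 𝔖_{w s_i}` whenever `w(i) > w(i+1)` (cleared of denominators). -/
def IsSchubertFamily (Sf : Equiv.Perm ℤ → MvPolynomial ℤ ℤ) : Prop :=
  (∀ w ∈ SinftySet, ∀ lam : ℤ → ℕ, IsPartitionFun lam → RotheD w = YDiag lam →
     ∀ M : ℕ, (∀ i : ℤ, (M : ℤ) < i → lam i = 0) → Sf w = xpow lam M) ∧
  (∀ w ∈ SinftySet, ∀ i : ℤ, 1 ≤ i → w (i + 1) < w i →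
     (X i - X (i + 1)) * Sf (w * sT i) = Sf w - MvPolynomial.rename (sT i) (Sf w))

/-- Substituting `x_m = 0` for all `m > n` in a polynomial. -/
noncomputable def restrictVars (n : ℕ) (g : MvPolynomial ℤ ℤ) : MvPolynomial ℤ ℤ :=
  (MvPolynomial.aeval fun m : ℤ => if m ≤ (n : ℤ) then (X m : MvPolynomial ℤ ℤ) else 0) g

/-! ### Queer crystal operators `ē_1`, `f̄_1`, `σ_i` on symplectic factorizations -/

/-- Insert a letter directly after the first letter of a list. -/
def insertAfterFirst (c : ℤ) : List ℤ → List ℤ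
  | [] => [c]
  | x :: t => x :: c :: t

/-- The operator `ē_1` on symplectic reduced factorizations. -/
def e1barOp (a : ℕ → List ℤ) : Option (ℕ → List ℤ) :=
  match a 1 with
  | [] => none
  | y :: s =>
    if ∀ x ∈ a 0, x < y then
      if Even y then
        some (Function.update (Function.update a 1 s) 0 (y :: a 0))
      else
        some (Function.update (Function.update a 1 s) 0 (insertAfterFirst (y - 2) (a 0)))
    else none

/-- The operator `f̄_1` on symplectic reduced factorizations. -/
def f1barOp (a : ℕ → List ℤ) : Option (ℕ → List ℤ) :=
  match a 0 with
  | [] => none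
  | x :: _ =>
    if ∀ y ∈ a 1, y < x then
      if (x - 1) ∈ a 0 then
        some (Function.update (Function.update a 0 ((a 0).erase (x - 1))) 1 ((x + 1) :: a 1))
      else
        some (Function.update (Function.update a 0 ((a 0).erase x)) 1 (x :: a 1))
    else none

/-- The string-reversing operator `σ` acting on factors `i, i+1` (0-indexed):
apply `f^k` where `k = wt_i - wt_{i+1}` if `k ≥ 0`, and `e^{-k}` otherwise. -/
def sigZ (i : ℕ) (a : ℕ → List ℤ) : Option (ℕ → List ℤ) :=
  if (a (i + 1)).length ≤ (a i).length then
    iterOpt (fZ i) ((a i).length - (a (i + 1)).length) a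
  else
    iterOpt (eZ i) ((a (i + 1)).length - (a i).length) a

/-- The operators `ē_{j+1}` (0-indexed `j`), defined by
`ē_i = σ_{i-1} σ_i ē_{i-1} σ_i σ_{i-1}`. -/
def ebarOp : ℕ → (ℕ → List ℤ) → Option (ℕ → List ℤ)
  | 0 => e1barOp
  | j + 1 => fun a =>
      (sigZ j a).bind fun b => (sigZ (j + 1) b).bind fun c =>
        (ebarOp j c).bind fun d => (sigZ (j + 1) d).bind (sigZ j)

/-- The operators `f̄_{j+1}` (0-indexed `j`). -/
def fbarOp : ℕ → (ℕ → List ℤ) → Option (ℕ → List ℤ)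
  | 0 => f1barOp
  | j + 1 => fun a =>
      (sigZ j a).bind fun b => (sigZ (j + 1) b).bind fun c =>
        (fbarOp j c).bind fun d => (sigZ (j + 1) d).bind (sigZ j)

/-! ### Crystal Demazure operators on symplectic factorizations -/

/-- The crystal Demazure operator `𝔇_i` (paper-indexed `i ∈ [n-1]`) inside the ambient
crystal `RF^Sp_n(z)`:  all `b` with `e_i^m(b) ∈ X` for some `m ∈ ℕ`. -/
def DOpSp (n : ℕ) (z : Equiv.Perm ℤ) (i : ℤ) (Xs : Set (ℕ → List ℤ)) : Set (ℕ → List ℤ) :=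
  {b | b ∈ RFSp n z ∧ ∃ m : ℕ, ∃ b', iterOpt (eZ (i - 1).toNat) m b = some b' ∧ b' ∈ Xs}

/-- `𝔇_{i_1} 𝔇_{i_2} ⋯ 𝔇_{i_k} X` for the word `l = [i_1, …, i_k]`. -/
def DemFoldSp (n : ℕ) (z : Equiv.Perm ℤ) (l : List ℤ) (Xs : Set (ℕ → List ℤ)) :
    Set (ℕ → List ℤ) :=
  l.foldr (fun i Y => DOpSp n z i Y) Xs
/-- `RF_n(T)`: unprimed factorizations of `w` whose concatenation is Coxeter–Knuth equivalent
to `revrow(T)`. -/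
def RFZnTincr (n : ℕ) (w : Equiv.Perm ℤ) (T : List (List ℤ)) : Set (ℕ → List ℤ) :=
  {a | a ∈ RFZn n w ∧ CKEquiv (concatZ a n) (revrow T)}

/-! ## Auxiliary development for the proof -/

namespace EGaux

open List

/-! ### Words and reducedness -/

lemma wordProd_nil : wordProd [] = 1 := rfl

lemma wordProd_cons (x : ℤ) (l : List ℤ) : wordProd (x :: l) = sT x * wordProd l := by
  simp [wordProd]

lemma wordProd_append (u v : List ℤ) : wordProd (u ++ v) = wordProd u * wordProd v := by
  simp [wordProd]

lemma sT_mul_self (i : ℤ) : sT i * sT i = 1 := Equiv.swap_mul_self _ _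

lemma sT_apply (i k : ℤ) : sT i k = if k = i then i + 1 else if k = i + 1 then i else k := by
  simp [sT, Equiv.swap_apply_def]

set_option maxHeartbeats 1000000 in
lemma sT_comm {i j : ℤ} (h : i + 2 ≤ j ∨ j + 2 ≤ i) : sT i * sT j = sT j * sT i := by
  ext k
  simp only [Equiv.Perm.mul_apply, sT_apply]
  split_ifs <;> omega

set_option maxHeartbeats 1000000 in
lemma sT_braid (a : ℤ) : sT a * sT (a + 1) * sT a = sT (a + 1) * sT a * sT (a + 1) := by
  ext k
  simp only [Equiv.Perm.mul_apply, sT_apply]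
  split_ifs <;> omega

/-- Minimality of a word among words with the same product. -/
def Red (l : List ℤ) : Prop := ∀ m : List ℤ, wordProd m = wordProd l → l.length ≤ m.length

lemma red_of_isReducedWord {w : Equiv.Perm ℤ} {l : List ℤ} (h : IsReducedWord w l) : Red l := by
  intro m hm
  exact h.2 m (by rw [hm, h.1])

lemma isReducedWord_of_red {w : Equiv.Perm ℤ} {l : List ℤ} (h : Red l)
    (hw : wordProd l = w) : IsReducedWord w l := by
  refine ⟨hw, fun m hm => h m ?_⟩
  rw [hm, hw]

lemma red_prefix {u v : List ℤ} (h : Red (u ++ v)) : Red u := by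
  intro m hm
  have := h (m ++ v) (by rw [wordProd_append, wordProd_append, hm])
  simpa using this

lemma wordProd_reverse (l : List ℤ) : wordProd l.reverse = (wordProd l)⁻¹ := by
  induction l with
  | nil => simp [wordProd]
  | cons x t ih =>
    rw [List.reverse_cons, wordProd_append, ih, wordProd_cons x t, mul_inv_rev]
    congr 1 <;> simp [wordProd, sT]

lemma red_reverse {l : List ℤ} (h : Red l) : Red l.reverse := by
  intro m hm
  have h2 : wordProd m.reverse = wordProd l := by
    rw [wordProd_reverse, hm, wordProd_reverse, inv_inv]
  have := h m.reverse h2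
  simpa using this

/-- A word is contractible if some strictly shorter word has the same product. -/
def Contr (l : List ℤ) : Prop := ∃ m : List ℤ, wordProd m = wordProd l ∧ m.length < l.length

lemma red_not_contr {l : List ℤ} (h : Red l) : ¬ Contr l := by
  rintro ⟨m, hm, hlen⟩
  exact absurd (h m hm) (by omega)

lemma contr_transfer {l l' : List ℤ} (hp : wordProd l = wordProd l')
    (hl : l.length = l'.length) (h : Contr l') : Contr l := by
  obtain ⟨m, hm, hlen⟩ := h
  exact ⟨m, by rw [hm, hp], by omega⟩

lemma contr_context {m : List ℤ} (h : Contr m) (u v : List ℤ) : Contr (u ++ m ++ v) := by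
  obtain ⟨m', hm, hlen⟩ := h
  refine ⟨u ++ m' ++ v, ?_, by simp; omega⟩
  simp only [wordProd_append, hm]

lemma contr_adj (u v : List ℤ) (x : ℤ) : Contr (u ++ x :: x :: v) := by
  refine ⟨u ++ v, ?_, by simp⟩
  have e : u ++ x :: x :: v = u ++ [x, x] ++ v := by simp
  rw [e, wordProd_append, wordProd_append, wordProd_append]
  have e2 : wordProd [x, x] = 1 := by
    simpa [wordProd, mul_one] using sT_mul_self x
  rw [e2, mul_one]

lemma wordProd_sep {mid : List ℤ} {x : ℤ} (h : ∀ z ∈ mid, z + 2 ≤ x ∨ x + 2 ≤ z) :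
    wordProd (x :: mid ++ [x]) = wordProd mid := by
  induction mid with
  | nil => simpa [wordProd, mul_one] using sT_mul_self x
  | cons z t ih =>
    have hz := h z (by simp)
    have ht : ∀ y ∈ t, y + 2 ≤ x ∨ x + 2 ≤ y := fun y hy => h y (by simp [hy])
    have e1 : wordProd (x :: z :: t ++ [x]) = sT x * sT z * wordProd (t ++ [x]) := by
      simp [wordProd_cons, mul_assoc]
    have e2 : wordProd (x :: t ++ [x]) = sT x * wordProd (t ++ [x]) := by
      simp [wordProd_cons]
    rw [e1, sT_comm (by omega), mul_assoc, ← e2, ih ht, wordProd_cons]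

lemma contr_sep (u mid v : List ℤ) (x : ℤ) (h : ∀ z ∈ mid, z + 2 ≤ x ∨ x + 2 ≤ z) :
    Contr (u ++ x :: (mid ++ x :: v)) := by
  have e1 : u ++ x :: (mid ++ x :: v) = u ++ (x :: mid ++ [x]) ++ v := by simp
  rw [e1]
  refine ⟨u ++ mid ++ v, ?_, by simp⟩
  simp only [wordProd_append, wordProd_sep h]

lemma wordProd_braid_ctx (u v : List ℤ) {a b : ℤ} (h : b = a + 1 ∨ b = a - 1) :
    wordProd (u ++ a :: b :: a :: v) = wordProd (u ++ b :: a :: b :: v) := by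
  have e : ∀ p q r : ℤ, wordProd (u ++ p :: q :: r :: v)
      = wordProd u * (sT p * sT q * sT r) * wordProd v := by
    intro p q r
    have : u ++ p :: q :: r :: v = u ++ [p, q, r] ++ v := by simp
    rw [this, wordProd_append, wordProd_append]
    simp [wordProd, mul_assoc]
  rw [e, e]
  rcases h with h | h
  · subst h; rw [sT_braid a]
  · have ha : a = b + 1 := by omega
    subst ha; rw [sT_braid b]

lemma contr_braid4 (u v : List ℤ) {a b : ℤ} (h : b = a + 1 ∨ b = a - 1) :
    Contr (u ++ b :: a :: b :: a :: v) := by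
  refine ⟨u ++ a :: b :: v, ?_, by simp⟩
  have e1 : u ++ b :: a :: b :: a :: v = (u ++ [b]) ++ a :: b :: a :: v := by simp
  rw [e1, wordProd_braid_ctx (u ++ [b]) v h]
  have e2 : (u ++ [b]) ++ b :: a :: b :: v = u ++ [b, b] ++ (a :: b :: v) := by simp
  have e3 : u ++ a :: b :: v = u ++ (a :: b :: v) := by simp
  rw [e2, e3, wordProd_append, wordProd_append, wordProd_append]
  have e4 : wordProd [b, b] = 1 := by simpa [wordProd, mul_one] using sT_mul_self b
  rw [e4, mul_one]

/-! ### Coxeter–Knuth step infrastructure -/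

lemma ckstep_wordProd {l l' : List ℤ} (h : CKStep l l') : wordProd l = wordProd l' := by
  cases h with
  | acb u v h1 h2 =>
    rename_i a b c
    simp only [wordProd_append, wordProd_cons]
    congr 1
    rw [← mul_assoc, ← mul_assoc, sT_comm (show a + 2 ≤ c ∨ c + 2 ≤ a by omega)]
    simp [mul_assoc]
  | bca u v h1 h2 =>
    rename_i a b c
    simp only [wordProd_append, wordProd_cons]
    congr 2
    rw [← mul_assoc, ← mul_assoc, sT_comm (show c + 2 ≤ a ∨ a + 2 ≤ c by omega)]
  | braid u v h => exact wordProd_braid_ctx u v h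

lemma ckstep_length {l l' : List ℤ} (h : CKStep l l') : l.length = l'.length := by
  cases h <;> simp

lemma ckstep_append_left {l l' : List ℤ} (h : CKStep l l') (p : List ℤ) :
    CKStep (p ++ l) (p ++ l') := by
  cases h with
  | acb u v h1 h2 => simpa [← List.append_assoc] using CKStep.acb (p ++ u) v h1 h2
  | bca u v h1 h2 => simpa [← List.append_assoc] using CKStep.bca (p ++ u) v h1 h2
  | braid u v h => simpa [← List.append_assoc] using CKStep.braid (p ++ u) v h

lemma ckstep_append_right {l l' : List ℤ} (h : CKStep l l') (p : List ℤ) :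
    CKStep (l ++ p) (l' ++ p) := by
  cases h with
  | acb u v h1 h2 => simpa [List.append_assoc] using CKStep.acb u (v ++ p) h1 h2
  | bca u v h1 h2 => simpa [List.append_assoc] using CKStep.bca u (v ++ p) h1 h2
  | braid u v h => simpa [List.append_assoc] using CKStep.braid u (v ++ p) h

lemma ckeq_map {f : List ℤ → List ℤ} (hf : ∀ a b, CKStep a b → CKStep (f a) (f b))
    {x y : List ℤ} (h : CKEquiv x y) : CKEquiv (f x) (f y) := by
  induction h with
  | rel a b hab => exact Relation.EqvGen.rel _ _ (hf a b hab)
  | refl a => exact Relation.EqvGen.refl _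
  | symm a b _ ih => exact Relation.EqvGen.symm _ _ ih
  | trans a b c _ _ ih1 ih2 => exact Relation.EqvGen.trans _ _ _ ih1 ih2

lemma ckeq_append_left {l l' : List ℤ} (h : CKEquiv l l') (p : List ℤ) :
    CKEquiv (p ++ l) (p ++ l') :=
  ckeq_map (f := (p ++ ·)) (fun _ _ hab => ckstep_append_left hab p) h

lemma ckeq_append_right {l l' : List ℤ} (h : CKEquiv l l') (p : List ℤ) :
    CKEquiv (l ++ p) (l' ++ p) :=
  ckeq_map (f := (· ++ p)) (fun _ _ hab => ckstep_append_right hab p) h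

lemma ckeq_refl (l : List ℤ) : CKEquiv l l := Relation.EqvGen.refl _

lemma ckeq_symm {l l' : List ℤ} (h : CKEquiv l l') : CKEquiv l' l := Relation.EqvGen.symm _ _ h

lemma ckeq_trans {a b c : List ℤ} (h1 : CKEquiv a b) (h2 : CKEquiv b c) : CKEquiv a c :=
  Relation.EqvGen.trans _ _ _ h1 h2

lemma ckeq_wordProd {l l' : List ℤ} (h : CKEquiv l l') : wordProd l = wordProd l' := by
  induction h with
  | rel a b hab => exact ckstep_wordProd hab
  | refl a => rfl
  | symm a b _ ih => exact ih.symm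
  | trans a b c _ _ ih1 ih2 => exact ih1.trans ih2

lemma ckeq_length {l l' : List ℤ} (h : CKEquiv l l') : l.length = l'.length := by
  induction h with
  | rel a b hab => exact ckstep_length hab
  | refl a => rfl
  | symm a b _ ih => exact ih.symm
  | trans a b c _ _ ih1 ih2 => exact ih1.trans ih2

lemma ckeq_red_iff {l l' : List ℤ} (h : CKEquiv l l') : Red l ↔ Red l' := by
  have hp := ckeq_wordProd h
  have hl := ckeq_length h
  constructor <;> intro hr m hm
  · rw [← hl]; exact hr m (by rw [hm, hp])
  · rw [hl]; exact hr m (by rw [hm, ← hp])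

lemma ckstep_reverse {l l' : List ℤ} (h : CKStep l l') : CKStep l.reverse l'.reverse := by
  have e : ∀ (p q r : ℤ) (s t : List ℤ), (s ++ p :: q :: r :: t).reverse
      = t.reverse ++ r :: q :: p :: s.reverse := by intros; simp
  cases h with
  | acb u v h1 h2 => rw [e, e]; exact CKStep.bca v.reverse u.reverse h1 h2
  | bca u v h1 h2 => rw [e, e]; exact CKStep.acb v.reverse u.reverse h1 h2
  | braid u v h => rw [e, e]; exact CKStep.braid v.reverse u.reverse h

lemma ckeq_reverse {l l' : List ℤ} (h : CKEquiv l l') : CKEquiv l.reverse l'.reverse :=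
  ckeq_map (f := List.reverse) (fun _ _ hab => ckstep_reverse hab) h

end EGaux

namespace EGaux

open List

/-! ### Edelman–Greene insertion -/

/-- Insert a letter into an increasing row; return new row and optional bumped letter. -/
def insRow (x : ℤ) : List ℤ → List ℤ × Option ℤ
  | [] => ([x], none)
  | y :: t =>
    if x < y then (x :: t, some y)
    else if x = y then (y :: t, some (x + 1))
    else ((y :: (insRow x t).1), (insRow x t).2)

lemma insRow_nil (x : ℤ) : insRow x [] = ([x], none) := rfl

lemma insRow_bump {x y : ℤ} (h : x < y) (t : List ℤ) :
    insRow x (y :: t) = (x :: t, some y) := by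
  simp [insRow, h]

lemma insRow_special (x : ℤ) (t : List ℤ) : insRow x (x :: t) = (x :: t, some (x + 1)) := by
  simp [insRow]

lemma insRow_skip {x y : ℤ} (h : y < x) (t : List ℤ) :
    insRow x (y :: t) = (y :: (insRow x t).1, (insRow x t).2) := by
  simp only [insRow, if_neg (by omega : ¬ x < y), if_neg (by omega : ¬ x = y)]

lemma insRow_pre {A : List ℤ} {x : ℤ} (h : ∀ z ∈ A, z < x) (s : List ℤ) :
    insRow x (A ++ s) = (A ++ (insRow x s).1, (insRow x s).2) := by
  induction A with
  | nil => simp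
  | cons a A ih =>
    have ha : a < x := h a (by simp)
    have h' : ∀ z ∈ A, z < x := fun z hz => h z (by simp [hz])
    simp [insRow_skip ha, ih h']

lemma insRow_all_lt {r : List ℤ} {x : ℤ} (h : ∀ z ∈ r, z < x) :
    insRow x r = (r ++ [x], none) := by
  have := insRow_pre h []
  simpa [insRow_nil] using this

lemma insRow_at_special {A : List ℤ} {x : ℤ} (h : ∀ z ∈ A, z < x) (S : List ℤ) :
    insRow x (A ++ x :: S) = (A ++ x :: S, some (x + 1)) := by
  rw [insRow_pre h, insRow_special]

lemma insRow_at_bump {A : List ℤ} {x y : ℤ} (h : ∀ z ∈ A, z < x) (hxy : x < y) (S : List ℤ) :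
    insRow x (A ++ y :: S) = (A ++ x :: S, some y) := by
  rw [insRow_pre h, insRow_bump hxy]

/-- Insert a word into a row, collecting the bumped letters in order. -/
def rowIns : List ℤ → List ℤ → List ℤ × List ℤ
  | r, [] => (r, [])
  | r, x :: w =>
    ((rowIns (insRow x r).1 w).1, (insRow x r).2.toList ++ (rowIns (insRow x r).1 w).2)

lemma rowIns_nil (r : List ℤ) : rowIns r [] = (r, []) := rfl

lemma rowIns_cons (r : List ℤ) (x : ℤ) (w : List ℤ) :
    rowIns r (x :: w)
      = ((rowIns (insRow x r).1 w).1, (insRow x r).2.toList ++ (rowIns (insRow x r).1 w).2) :=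
  rfl

lemma rowIns_three {r r1 r2 r3 : List ℤ} {x1 x2 x3 : ℤ} {o1 o2 o3 : Option ℤ}
    (h1 : insRow x1 r = (r1, o1)) (h2 : insRow x2 r1 = (r2, o2)) (h3 : insRow x3 r2 = (r3, o3)) :
    rowIns r [x1, x2, x3] = (r3, o1.toList ++ (o2.toList ++ o3.toList)) := by
  simp [rowIns_cons, rowIns_nil, h1, h2, h3]

lemma rowIns_len_le : ∀ (w r : List ℤ), (rowIns r w).2.length ≤ w.length := by
  intro w
  induction w with
  | nil => intro r; simp [rowIns_nil]
  | cons x w ih =>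
    intro r
    rw [rowIns_cons]
    have h1 : (insRow x r).2.toList.length ≤ 1 := by
      cases (insRow x r).2 <;> simp
    have := ih (insRow x r).1
    simp only [List.length_append, List.length_cons]
    omega

/-- Insert a letter into a tableau (EG insertion step). -/
def insTab : List (List ℤ) → ℤ → List (List ℤ)
  | [], x => [[x]]
  | r :: Q, x =>
    match insRow x r with
    | (r', none) => r' :: Q
    | (r', some y) => r' :: insTab Q y

/-- Insert a word into a tableau. -/
def insW (Q : List (List ℤ)) (w : List ℤ) : List (List ℤ) := w.foldl insTab Q

lemma insW_nil (Q : List (List ℤ)) : insW Q [] = Q := rfl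

lemma insW_cons (Q : List (List ℤ)) (x : ℤ) (w : List ℤ) :
    insW Q (x :: w) = insW (insTab Q x) w := rfl

lemma insW_append (Q : List (List ℤ)) (u v : List ℤ) :
    insW Q (u ++ v) = insW (insW Q u) v := by simp [insW]

lemma insTab_none {r r' : List ℤ} {x : ℤ} (h : insRow x r = (r', none)) (Q : List (List ℤ)) :
    insTab (r :: Q) x = r' :: Q := by
  simp [insTab, h]

lemma insTab_some {r r' : List ℤ} {x y : ℤ} (h : insRow x r = (r', some y))
    (Q : List (List ℤ)) : insTab (r :: Q) x = r' :: insTab Q y := by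
  simp [insTab, h]

lemma insW_cons_fact : ∀ (w r : List ℤ) (Q : List (List ℤ)),
    insW (r :: Q) w = (rowIns r w).1 :: insW Q (rowIns r w).2 := by
  intro w
  induction w with
  | nil => intro r Q; simp [insW_nil, rowIns_nil]
  | cons x w ih =>
    intro r Q
    rcases ho : insRow x r with ⟨r', o⟩
    cases o with
    | none =>
      rw [insW_cons, insTab_none ho, ih, rowIns_cons, ho]
      simp
    | some y =>
      rw [insW_cons, insTab_some ho, ih, rowIns_cons, ho]
      simp only [Option.toList_some, List.singleton_append]
      rfl

lemma insW_nil_fact (w : List ℤ) (hw : w ≠ []) :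
    insW [] w = (rowIns [] w).1 :: insW [] (rowIns [] w).2 := by
  cases w with
  | nil => exact absurd rfl hw
  | cons x w' =>
    have h0 : insRow x [] = ([x], none) := rfl
    rw [insW_cons, rowIns_cons, h0]
    have : insTab [] x = [x] :: [] := rfl
    rw [this, insW_cons_fact]
    simp

/-! ### Row bump as Coxeter–Knuth moves -/

lemma ck_moveLeft : ∀ (S : List ℤ), S.Pairwise (· < ·) → ∀ b x : ℤ, x < b → (∀ s ∈ S, b < s) →
    CKEquiv (b :: (S ++ [x])) (b :: x :: S) := by
  intro S
  induction S with
  | nil => intro _ b x _ _; exact ckeq_refl _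
  | cons s S' ih =>
    intro hs b x hxb hbs
    have hb_s : b < s := hbs s (by simp)
    have hsS' : ∀ z ∈ S', s < z := (List.pairwise_cons.mp hs).1
    have hs' : S'.Pairwise (· < ·) := (List.pairwise_cons.mp hs).2
    have inner : CKEquiv (s :: (S' ++ [x])) (s :: x :: S') :=
      ih hs' s x (lt_trans hxb hb_s) hsS'
    have lift : CKEquiv (b :: s :: (S' ++ [x])) (b :: s :: x :: S') := by
      have := ckeq_append_left inner [b]
      simpa using this
    have step : CKStep (b :: s :: x :: S') (b :: x :: s :: S') := by
      have := CKStep.bca (a := x) (b := b) (c := s) [] S' hxb hb_s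
      simpa using this
    exact ckeq_trans lift (Relation.EqvGen.rel _ _ step)

lemma ck_moveBig : ∀ (A : List ℤ), A.Pairwise (· < ·) → ∀ x y : ℤ, ∀ t : List ℤ,
    (∀ z ∈ A, z < x) → x < y → CKEquiv (A ++ y :: x :: t) (y :: (A ++ x :: t)) := by
  intro A
  induction A with
  | nil => intro _ x y t _ _; exact ckeq_refl _
  | cons a A' ih =>
    intro hs x y t hA hxy
    have ha_x : a < x := hA a (by simp)
    have haA' : ∀ z ∈ A', a < z := (List.pairwise_cons.mp hs).1
    have hs' : A'.Pairwise (· < ·) := (List.pairwise_cons.mp hs).2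
    have hA' : ∀ z ∈ A', z < x := fun z hz => hA z (by simp [hz])
    have inner : CKEquiv (A' ++ y :: x :: t) (y :: (A' ++ x :: t)) := ih hs' x y t hA' hxy
    have lift : CKEquiv (a :: (A' ++ y :: x :: t)) (a :: y :: (A' ++ x :: t)) := by
      have := ckeq_append_left inner [a]
      simpa using this
    have step : CKStep (a :: y :: (A' ++ x :: t)) (y :: a :: (A' ++ x :: t)) := by
      cases A' with
      | nil =>
        have := CKStep.acb (a := a) (b := x) (c := y) [] t ha_x hxy
        simpa using this
      | cons a' A'' =>
        have ha' : a < a' := haA' a' (by simp)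
        have ha'y : a' < y := lt_trans (hA' a' (by simp)) hxy
        have := CKStep.acb (a := a) (b := a') (c := y) [] (A'' ++ x :: t) ha' ha'y
        simpa using this
    exact ckeq_trans lift (Relation.EqvGen.rel _ _ step)

/-- Trichotomy split of a sorted row relative to a letter. -/
lemma sorted_split3 {r : List ℤ} (hr : r.Pairwise (· < ·)) (x : ℤ) :
    (∀ z ∈ r, z < x) ∨
    (∃ A S, r = A ++ x :: S ∧ (∀ z ∈ A, z < x) ∧ (∀ z ∈ S, x < z)) ∨
    (∃ A y S, r = A ++ y :: S ∧ (∀ z ∈ A, z < x) ∧ x < y ∧ (∀ z ∈ S, y < z)) := by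
  induction r with
  | nil => left; simp
  | cons h t ih =>
    have hht : ∀ z ∈ t, h < z := (List.pairwise_cons.mp hr).1
    have ht : t.Pairwise (· < ·) := (List.pairwise_cons.mp hr).2
    rcases lt_trichotomy h x with hlt | heq | hgt
    · rcases ih ht with hall | ⟨A, S, hAS, hA, hS⟩ | ⟨A, y, S, hAS, hA, hxy, hS⟩
      · left
        intro z hz
        rcases List.mem_cons.mp hz with rfl | hz
        · exact hlt
        · exact hall z hz
      · right; left
        refine ⟨h :: A, S, by simp [hAS], ?_, hS⟩
        intro z hz
        rcases List.mem_cons.mp hz with rfl | hz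
        · exact hlt
        · exact hA z hz
      · right; right
        refine ⟨h :: A, y, S, by simp [hAS], ?_, hxy, hS⟩
        intro z hz
        rcases List.mem_cons.mp hz with rfl | hz
        · exact hlt
        · exact hA z hz
    · right; left
      exact ⟨[], t, by simp [heq], by simp, by simpa [heq] using hht⟩
    · right; right
      exact ⟨[], h, t, by simp, by simp, hgt, hht⟩

lemma sorted_middle {A : List ℤ} {x : ℤ} {S : List ℤ}
    (hA : A.Pairwise (· < ·)) (hS : S.Pairwise (· < ·))
    (h1 : ∀ z ∈ A, z < x) (h2 : ∀ z ∈ S, x < z) : (A ++ x :: S).Pairwise (· < ·) := by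
  refine List.pairwise_append.mpr ⟨hA, List.pairwise_cons.mpr ⟨h2, hS⟩, ?_⟩
  intro a ha b hb
  rcases List.mem_cons.mp hb with rfl | hb
  · exact h1 a ha
  · exact lt_trans (h1 a ha) (h2 b hb)

lemma sorted_of_append_middle {A : List ℤ} {y : ℤ} {S : List ℤ}
    (h : (A ++ y :: S).Pairwise (· < ·)) :
    A.Pairwise (· < ·) ∧ S.Pairwise (· < ·) ∧ (∀ z ∈ A, z < y) ∧ (∀ z ∈ S, y < z) := by
  obtain ⟨hA, hyS, hcross⟩ := List.pairwise_append.mp h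
  obtain ⟨h2, h3⟩ := List.pairwise_cons.mp hyS
  exact ⟨hA, h3, fun z hz => hcross z hz y (by simp), h2⟩

/-- Single-letter row bump lemma. -/
lemma rb1 {r : List ℤ} (hr : r.Pairwise (· < ·)) (x : ℤ) :
    Contr (r ++ [x]) ∨
    ((insRow x r).1.Pairwise (· < ·) ∧
      CKEquiv (r ++ [x]) ((insRow x r).2.toList ++ (insRow x r).1)) := by
  rcases sorted_split3 hr x with hall | ⟨A, S, rfl, hA, hS⟩ | ⟨A, y, S, rfl, hA, hxy, hS⟩
  · right
    rw [insRow_all_lt hall]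
    constructor
    · exact List.pairwise_append.mpr
        ⟨hr, by simp, fun a ha b hb => by rw [List.mem_singleton.mp hb]; exact hall a ha⟩
    · exact ckeq_refl _
  · -- x occurs in the row
    obtain ⟨hAs, hSs, -, -⟩ := sorted_of_append_middle hr
    rw [insRow_at_special hA]
    cases S with
    | nil =>
      left
      have e : (A ++ x :: []) ++ [x] = A ++ x :: x :: [] := by simp
      rw [e]
      exact contr_adj A [] x
    | cons s S' =>
      have hsS' : ∀ z ∈ S', s < z := (List.pairwise_cons.mp hSs).1
      have hS's : S'.Pairwise (· < ·) := (List.pairwise_cons.mp hSs).2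
      by_cases hsx : s = x + 1
      · right
        refine ⟨hr, ?_⟩
        subst hsx
        have c1 : CKEquiv ((x+1) :: (S' ++ [x])) ((x+1) :: x :: S') :=
          ck_moveLeft S' hS's (x+1) x (by omega) hsS'
        have lift1 : CKEquiv ((A ++ [x]) ++ ((x+1) :: (S' ++ [x])))
            ((A ++ [x]) ++ ((x+1) :: x :: S')) := ckeq_append_left c1 _
        have e1 : (A ++ x :: (x+1) :: S') ++ [x] = (A ++ [x]) ++ ((x+1) :: (S' ++ [x])) := by
          simp
        have e2 : (A ++ [x]) ++ ((x+1) :: x :: S') = A ++ x :: (x+1) :: x :: S' := by simp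
        have step : CKStep (A ++ x :: (x+1) :: x :: S') (A ++ (x+1) :: x :: (x+1) :: S') :=
          CKStep.braid A S' (Or.inl rfl)
        have c2 : CKEquiv (A ++ (x+1) :: x :: ((x+1) :: S')) ((x+1) :: (A ++ x :: (x+1) :: S')) :=
          ck_moveBig A hAs x (x+1) ((x+1) :: S') hA (by omega)
        have final : (some (x+1)).toList ++ (A ++ x :: (x + 1) :: S')
            = (x+1) :: (A ++ x :: (x+1) :: S') := by simp
        rw [final, e1]
        exact ckeq_trans lift1 (by rw [e2]; exact ckeq_trans (Relation.EqvGen.rel _ _ step) c2)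
      · left
        have hmid : ∀ z ∈ s :: S', z + 2 ≤ x ∨ x + 2 ≤ z := by
          intro z hz
          have hz1 : x < z := hS z hz
          have hz2 : z = s ∨ s < z := by
            rcases List.mem_cons.mp hz with rfl | hz'
            · exact Or.inl rfl
            · exact Or.inr (hsS' z hz')
          right
          rcases hz2 with rfl | hz2
          · omega
          · have : x < s := hS s (by simp)
            omega
        have e : (A ++ x :: s :: S') ++ [x] = A ++ x :: ((s :: S') ++ x :: []) := by simp
        rw [e]
        exact contr_sep A (s :: S') [] x hmid
  · -- x bumps y
    obtain ⟨hAs, hSs, -, -⟩ := sorted_of_append_middle hr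
    rw [insRow_at_bump hA hxy]
    right
    constructor
    · exact sorted_middle hAs hSs hA (fun z hz => lt_trans hxy (hS z hz))
    · have c1 : CKEquiv (y :: (S ++ [x])) (y :: x :: S) := ck_moveLeft S hSs y x hxy hS
      have lift1 : CKEquiv (A ++ (y :: (S ++ [x]))) (A ++ (y :: x :: S)) := ckeq_append_left c1 _
      have c2 : CKEquiv (A ++ y :: x :: S) (y :: (A ++ x :: S)) :=
        ck_moveBig A hAs x y S hA hxy
      have e1 : (A ++ y :: S) ++ [x] = A ++ (y :: (S ++ [x])) := by simp
      have e2 : (some y).toList ++ (A ++ x :: S) = y :: (A ++ x :: S) := by simp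
      rw [e1, e2]
      exact ckeq_trans lift1 c2

/-- Multi-letter row bump lemma. -/
lemma rbm : ∀ (w r : List ℤ), r.Pairwise (· < ·) →
    Contr (r ++ w) ∨
    ((rowIns r w).1.Pairwise (· < ·) ∧ CKEquiv (r ++ w) ((rowIns r w).2 ++ (rowIns r w).1)) := by
  intro w
  induction w with
  | nil =>
    intro r hr
    right
    refine ⟨hr, ?_⟩
    simp only [rowIns_nil, List.append_nil, List.nil_append]
    exact ckeq_refl _
  | cons x w ih =>
    intro r hr
    rcases rb1 hr x with hc | ⟨hs1, hck1⟩
    · left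
      have := contr_context hc [] w
      simpa using this
    · rcases ih (insRow x r).1 hs1 with hc2 | ⟨hs2, hck2⟩
      · left
        have h1 : Contr ((insRow x r).2.toList ++ ((insRow x r).1 ++ w) ++ []) :=
          contr_context hc2 _ _
        have h2 : Contr ((insRow x r).2.toList ++ (insRow x r).1 ++ w) := by
          simpa [List.append_assoc] using h1
        have hp : wordProd (r ++ x :: w) = wordProd ((insRow x r).2.toList ++ (insRow x r).1 ++ w) := by
          have e : r ++ x :: w = (r ++ [x]) ++ w := by simp
          rw [e, wordProd_append (r ++ [x]) w, ckeq_wordProd hck1, ← wordProd_append]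
        have hl : (r ++ x :: w).length = ((insRow x r).2.toList ++ (insRow x r).1 ++ w).length := by
          have := ckeq_length hck1
          simp only [List.length_append, List.length_cons, List.length_nil] at *
          omega
        exact contr_transfer hp hl h2
      · right
        rw [rowIns_cons]
        refine ⟨hs2, ?_⟩
        have e : r ++ x :: w = (r ++ [x]) ++ w := by simp
        rw [e]
        have s1 : CKEquiv ((r ++ [x]) ++ w) (((insRow x r).2.toList ++ (insRow x r).1) ++ w) :=
          ckeq_append_right hck1 w
        have s2 : CKEquiv ((insRow x r).2.toList ++ ((insRow x r).1 ++ w))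
            ((insRow x r).2.toList ++ ((rowIns (insRow x r).1 w).2 ++ (rowIns (insRow x r).1 w).1)) :=
          ckeq_append_left hck2 _
        refine ckeq_trans s1 ?_
        have e2 : ((insRow x r).2.toList ++ (insRow x r).1) ++ w
            = (insRow x r).2.toList ++ ((insRow x r).1 ++ w) := by simp
        rw [e2]
        refine ckeq_trans s2 ?_
        have e3 : (insRow x r).2.toList ++ ((rowIns (insRow x r).1 w).2 ++ (rowIns (insRow x r).1 w).1)
            = ((insRow x r).2.toList ++ (rowIns (insRow x r).1 w).2) ++ (rowIns (insRow x r).1 w).1 := by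
          simp
        rw [e3]
        exact ckeq_refl _

/-! ### Insertion preserves the CK class -/

def rowsSorted (Q : List (List ℤ)) : Prop := ∀ r ∈ Q, r.Pairwise (· < ·)

lemma rowword_cons (r : List ℤ) (Q : List (List ℤ)) : rowword (r :: Q) = rowword Q ++ r := by
  simp [rowword]

lemma rowword_nil : rowword [] = [] := rfl

lemma mnil : ∀ (n : ℕ) (m : List ℤ), m.length ≤ n → Red m →
    rowsSorted (insW [] m) ∧ CKEquiv (rowword (insW [] m)) m := by
  intro n
  induction n with
  | zero =>
    intro m hm _
    have : m = [] := List.length_eq_zero_iff.mp (by omega)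
    subst this
    exact ⟨by intro r hr; simp [insW_nil] at hr, ckeq_refl _⟩
  | succ n ih =>
    intro m hm hred
    cases hm0 : m with
    | nil =>
      subst hm0
      exact ⟨by intro r hr; simp [insW_nil] at hr, ckeq_refl _⟩
    | cons x m' =>
      subst hm0
      rcases rbm (x :: m') [] (by simp) with hc | ⟨hs, hck⟩
      · exact absurd (by simpa using hc) (red_not_contr hred)
      · have hckm : CKEquiv (x :: m') ((rowIns [] (x :: m')).2 ++ (rowIns [] (x :: m')).1) := by
          simpa using hck
        have hbs_len : (rowIns [] (x :: m')).2.length ≤ n := by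
          have h1 : (rowIns [] (x :: m')).2 = (rowIns [x] m').2 := by
            rw [rowIns_cons]
            simp [insRow_nil]
          rw [h1]
          have := rowIns_len_le m' [x]
          simp at hm
          omega
        have hredbs : Red (rowIns [] (x :: m')).2 := by
          have h2 : Red ((rowIns [] (x :: m')).2 ++ (rowIns [] (x :: m')).1) :=
            (ckeq_red_iff hckm).mp hred
          exact red_prefix h2
        obtain ⟨ihs, ihck⟩ := ih _ hbs_len hredbs
        rw [insW_nil_fact _ (by simp)]
        constructor
        · intro r hr
          rcases List.mem_cons.mp hr with rfl | hr
          · exact hs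
          · exact ihs r hr
        · rw [rowword_cons]
          have s1 : CKEquiv (rowword (insW [] (rowIns [] (x :: m')).2) ++ (rowIns [] (x :: m')).1)
              ((rowIns [] (x :: m')).2 ++ (rowIns [] (x :: m')).1) := ckeq_append_right ihck _
          exact ckeq_trans s1 (ckeq_symm hckm)

lemma mgen : ∀ (Q : List (List ℤ)), rowsSorted Q → ∀ m : List ℤ, Red (rowword Q ++ m) →
    rowsSorted (insW Q m) ∧ CKEquiv (rowword (insW Q m)) (rowword Q ++ m) := by
  intro Q
  induction Q with
  | nil =>
    intro _ m hred
    have h := mnil m.length m le_rfl (by simpa [rowword] using hred)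
    refine ⟨h.1, ?_⟩
    simpa [rowword] using h.2
  | cons r Q ih =>
    intro hQs m hred
    have hr : r.Pairwise (· < ·) := hQs r (by simp)
    have hQs' : rowsSorted Q := fun s hs => hQs s (by simp [hs])
    have hred2 : Red (rowword Q ++ (r ++ m)) := by
      have e : rowword (r :: Q) ++ m = rowword Q ++ (r ++ m) := by
        rw [rowword_cons]; simp
      rwa [e] at hred
    rcases rbm m r hr with hc | ⟨hs, hck⟩
    · exfalso
      have := contr_context hc (rowword Q) []
      exact red_not_contr hred2 (by simpa using this)
    · have hckfull : CKEquiv (rowword Q ++ (r ++ m))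
          (rowword Q ++ ((rowIns r m).2 ++ (rowIns r m).1)) := ckeq_append_left hck _
      have hred3 : Red (rowword Q ++ (rowIns r m).2) := by
        have h4 : Red (rowword Q ++ ((rowIns r m).2 ++ (rowIns r m).1)) :=
          (ckeq_red_iff hckfull).mp hred2
        have e : rowword Q ++ ((rowIns r m).2 ++ (rowIns r m).1)
            = (rowword Q ++ (rowIns r m).2) ++ (rowIns r m).1 := by simp
        rw [e] at h4
        exact red_prefix h4
      obtain ⟨ihs, ihck⟩ := ih hQs' (rowIns r m).2 hred3
      rw [insW_cons_fact]
      constructor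
      · intro s hsm
        rcases List.mem_cons.mp hsm with rfl | hsm
        · exact hs
        · exact ihs s hsm
      · rw [rowword_cons]
        have s1 : CKEquiv (rowword (insW Q (rowIns r m).2) ++ (rowIns r m).1)
            ((rowword Q ++ (rowIns r m).2) ++ (rowIns r m).1) := ckeq_append_right ihck _
        have e : rowword (r :: Q) ++ m = rowword Q ++ (r ++ m) := by
          rw [rowword_cons]; simp
        rw [e]
        refine ckeq_trans s1 ?_
        have e2 : (rowword Q ++ (rowIns r m).2) ++ (rowIns r m).1
            = rowword Q ++ ((rowIns r m).2 ++ (rowIns r m).1) := by simp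
        rw [e2]
        exact ckeq_symm hckfull

end EGaux

namespace EGaux

open List

/-! ### Small helper lemmas about `insRow` -/

lemma insRow_snd_gt {x : ℤ} : ∀ {r : List ℤ} {y : ℤ}, (insRow x r).2 = some y → x < y := by
  intro r
  induction r with
  | nil => intro y h; simp [insRow_nil] at h
  | cons h t ih =>
    intro y hin
    rcases lt_trichotomy x h with h1 | h1 | h1
    · rw [insRow_bump h1] at hin
      simp at hin
      omega
    · subst h1
      rw [insRow_special] at hin
      simp at hin
      omega
    · rw [insRow_skip h1] at hin
      exact ih hin

lemma insRow_snd_cases {x : ℤ} : ∀ {r : List ℤ} {y : ℤ}, (insRow x r).2 = some y →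
    (x ∈ r ∧ y = x + 1) ∨ (y ∈ r ∧ x < y) := by
  intro r
  induction r with
  | nil => intro y h; simp [insRow_nil] at h
  | cons h t ih =>
    intro y hin
    rcases lt_trichotomy x h with h1 | h1 | h1
    · rw [insRow_bump h1] at hin
      simp at hin
      right; exact ⟨by simp [hin.symm], by omega⟩
    · subst h1
      rw [insRow_special] at hin
      simp at hin
      left; exact ⟨by simp, hin.symm⟩
    · rw [insRow_skip h1] at hin
      rcases ih hin with ⟨hm, hy⟩ | ⟨hm, hy⟩
      · exact Or.inl ⟨by simp [hm], hy⟩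
      · exact Or.inr ⟨by simp [hm], hy⟩

lemma insRow_none_lt {x : ℤ} : ∀ {r : List ℤ}, (insRow x r).2 = none → ∀ z ∈ r, z < x := by
  intro r
  induction r with
  | nil => intro _ z hz; simp at hz
  | cons h t ih =>
    intro hin z hz
    rcases lt_trichotomy x h with h1 | h1 | h1
    · rw [insRow_bump h1] at hin; simp at hin
    · subst h1; rw [insRow_special] at hin; simp at hin
    · rw [insRow_skip h1] at hin
      rcases List.mem_cons.mp hz with rfl | hz
      · exact h1
      · exact ih hin z hz

lemma insRow_self_mem (x : ℤ) : ∀ (r : List ℤ), x ∈ (insRow x r).1 := by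
  intro r
  induction r with
  | nil => simp [insRow_nil]
  | cons h t ih =>
    rcases lt_trichotomy x h with h1 | h1 | h1
    · rw [insRow_bump h1]; simp
    · subst h1; rw [insRow_special]; simp
    · rw [insRow_skip h1]; simp [ih]

lemma insRow_fst_mem {x : ℤ} : ∀ {r : List ℤ} {z : ℤ}, z ∈ (insRow x r).1 → z = x ∨ z ∈ r := by
  intro r
  induction r with
  | nil => intro z hz; simp [insRow_nil] at hz; exact Or.inl hz
  | cons h t ih =>
    intro z hz
    rcases lt_trichotomy x h with h1 | h1 | h1
    · rw [insRow_bump h1] at hz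
      rcases List.mem_cons.mp hz with rfl | hz
      · exact Or.inl rfl
      · exact Or.inr (by simp [hz])
    · subst h1
      rw [insRow_special] at hz
      exact Or.inr hz
    · rw [insRow_skip h1] at hz
      rcases List.mem_cons.mp hz with rfl | hz
      · exact Or.inr (by simp)
      · rcases ih hz with h2 | h2
        · exact Or.inl h2
        · exact Or.inr (by simp [h2])

lemma insRow_out_le {x e : ℤ} : ∀ {r : List ℤ}, r.Pairwise (· < ·) → e ∈ r → x < e →
    ∃ δ, (insRow x r).2 = some δ ∧ δ ≤ e := by
  intro r
  induction r with
  | nil => intro _ he; simp at he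
  | cons h t ih =>
    intro hs he hxe
    have hht : ∀ z ∈ t, h < z := (List.pairwise_cons.mp hs).1
    have hts : t.Pairwise (· < ·) := (List.pairwise_cons.mp hs).2
    have hhe : h ≤ e := by
      rcases List.mem_cons.mp he with rfl | he'
      · exact le_refl _
      · exact le_of_lt (hht e he')
    rcases lt_trichotomy x h with h1 | h1 | h1
    · rw [insRow_bump h1]
      exact ⟨h, rfl, hhe⟩
    · subst h1
      rw [insRow_special]
      exact ⟨x + 1, rfl, by omega⟩
    · rw [insRow_skip h1]
      have het : e ∈ t := by
        rcases List.mem_cons.mp he with rfl | he'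
        · omega
        · exact he'
      exact ih hts het hxe

/-- If inserting `b` then `c > b` both bump letters out, the bumped letters increase. -/
lemma seq {r : List ℤ} (hr : r.Pairwise (· < ·)) {b c : ℤ} (hbc : b < c) {β γ : ℤ}
    (h1 : (insRow b r).2 = some β) (h2 : (insRow c (insRow b r).1).2 = some γ) : β < γ := by
  have hγ : c < γ := insRow_snd_gt h2
  rcases insRow_snd_cases h1 with ⟨hbm, hβ⟩ | ⟨hβm, hβ⟩
  · -- β = b + 1
    omega
  · -- β ∈ r, b < β
    by_cases hβc : β ≤ c
    · omega
    · -- β > c : show γ > β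
      rcases sorted_split3 hr b with hall | ⟨A, S, hrr, hA, hS⟩ | ⟨A, y, S, hrr, hA, hxy, hS⟩
      · exfalso
        rw [insRow_all_lt hall] at h1
        simp at h1
      · rw [hrr, insRow_at_special hA] at h1 h2
        simp at h1
        omega
      · rw [hrr, insRow_at_bump hA hxy] at h1 h2
        simp at h1
        subst h1
        rcases insRow_snd_cases h2 with ⟨hcm, hγ'⟩ | ⟨hγm, hγ'⟩
        · -- c ∈ A ++ b :: S : impossible
          exfalso
          rcases List.mem_append.mp hcm with hc1 | hc2
          · have := hA c hc1; omega
          · rcases List.mem_cons.mp hc2 with h3 | h3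
            · omega
            · have := hS c h3; omega
        · -- γ ∈ A ++ b :: S with γ > c
          rcases List.mem_append.mp hγm with hg1 | hg2
          · have := hA γ hg1; omega
          · rcases List.mem_cons.mp hg2 with h3 | h3
            · omega
            · exact hS γ h3

lemma forall_lt_append {A B : List ℤ} {x : ℤ} (h1 : ∀ z ∈ A, z < x) (h2 : ∀ z ∈ B, z < x) :
    ∀ z ∈ A ++ B, z < x := by
  intro z hz
  rcases List.mem_append.mp hz with h | h
  · exact h1 z h
  · exact h2 z h

lemma forall_lt_cons {B : List ℤ} {y x : ℤ} (h1 : y < x) (h2 : ∀ z ∈ B, z < x) :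
    ∀ z ∈ y :: B, z < x := by
  intro z hz
  rcases List.mem_cons.mp hz with rfl | h
  · exact h1
  · exact h2 z h

/-- Commutation of two insertions when some row entry lies in `[x, y)`. -/
lemma disj {r : List ℤ} (hr : r.Pairwise (· < ·)) {x y e : ℤ} (hxy : x < y) (he : e ∈ r)
    (hxe : x ≤ e) (hey : e < y) :
    ∃ α r3, (insRow x r).2 = some α ∧
      insRow y (insRow x r).1 = (r3, (insRow y r).2) ∧
      insRow x (insRow y r).1 = (r3, some α) ∧
      x < α ∧ (x < e → α ≤ e) ∧
      ((α = x + 1 ∧ x ∈ r) ∨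
       (x ∉ r ∧ α ∈ r ∧ (∀ z ∈ r, x < z → α ≤ z) ∧
        ∀ z ∈ (insRow x r).1, z = x ∨ (z ∈ r ∧ z ≠ α))) := by
  rcases sorted_split3 hr x with hall | ⟨A, S, hrr, hA, hS⟩ | ⟨A, x', S, hrr, hA, hxx', hS⟩
  · exact absurd (hall e he) (by omega)
  · -- x ∈ r (special case)
    have hSs : S.Pairwise (· < ·) := (sorted_of_append_middle (hrr ▸ hr)).2.1
    have hxr : x ∈ r := by rw [hrr]; simp
    have heb : x < e → (x : ℤ) + 1 ≤ e := by omega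
    have hins : insRow x r = (r, some (x + 1)) := by rw [hrr]; exact (hrr ▸ insRow_at_special hA S)
    rcases sorted_split3 hSs y with hally | ⟨A', S', hSS, hA', hS'⟩ | ⟨A', z, S', hSS, hA', hyz, hS'⟩
    · -- y appends
      have hally' : ∀ w ∈ r, w < y := by
        rw [hrr]
        exact forall_lt_append (fun w hw => lt_trans (hA w hw) hxy)
          (forall_lt_cons hxy (fun w hw => hally w hw))
      have hiy : insRow y r = (r ++ [y], none) := insRow_all_lt hally'
      have hiy2 : insRow x (r ++ [y]) = (r ++ [y], some (x + 1)) := by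
        have e1 : r ++ [y] = A ++ x :: (S ++ [y]) := by rw [hrr]; simp
        rw [e1, insRow_at_special hA]
      refine ⟨x + 1, r ++ [y], by rw [hins], ?_, ?_, by omega, heb, Or.inl ⟨rfl, hxr⟩⟩
      · rw [hins]
        rw [hiy]
      · rw [hiy]
        exact hiy2
    · -- y ∈ S
      have hprefix : ∀ w ∈ A ++ x :: A', w < y :=
        forall_lt_append (fun w hw => lt_trans (hA w hw) hxy) (forall_lt_cons hxy hA')
      have e1 : r = (A ++ x :: A') ++ y :: S' := by rw [hrr, hSS]; simp
      have hiy : insRow y r = (r, some (y + 1)) := by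
        rw [e1, insRow_at_special hprefix, ← e1]
      refine ⟨x + 1, r, by rw [hins], ?_, ?_, by omega, heb, Or.inl ⟨rfl, hxr⟩⟩
      · rw [hins, hiy]
      · rw [hiy, hins]
    · -- y bumps z ∈ S
      have hprefix : ∀ w ∈ A ++ x :: A', w < y :=
        forall_lt_append (fun w hw => lt_trans (hA w hw) hxy) (forall_lt_cons hxy hA')
      have e1 : r = (A ++ x :: A') ++ z :: S' := by rw [hrr, hSS]; simp
      have hiy : insRow y r = ((A ++ x :: A') ++ y :: S', some z) := by
        rw [e1, insRow_at_bump hprefix hyz]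
      have hiy2 : insRow x ((A ++ x :: A') ++ y :: S') = ((A ++ x :: A') ++ y :: S', some (x+1)) := by
        have e2 : (A ++ x :: A') ++ y :: S' = A ++ x :: (A' ++ y :: S') := by simp
        rw [e2, insRow_at_special hA, ← e2]
      refine ⟨x + 1, (A ++ x :: A') ++ y :: S', by rw [hins], ?_, ?_, by omega, heb,
        Or.inl ⟨rfl, hxr⟩⟩
      · rw [hins, hiy]
      · rw [hiy, hiy2]
  · -- x bumps x'
    have hSs : S.Pairwise (· < ·) := (sorted_of_append_middle (hrr ▸ hr)).2.1
    have hins : insRow x r = (A ++ x :: S, some x') := by rw [hrr]; exact insRow_at_bump hA hxx' S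
    have hxnr : x ∉ r := by
      rw [hrr]
      intro hmem
      rcases List.mem_append.mp hmem with h | h
      · exact absurd (hA x h) (by omega)
      · rcases List.mem_cons.mp h with h | h
        · omega
        · exact absurd (hS x h) (by omega)
    have hmin : ∀ z ∈ r, x < z → x' ≤ z := by
      rw [hrr]
      intro z hz hxz
      rcases List.mem_append.mp hz with h | h
      · exact absurd (hA z h) (by omega)
      · rcases List.mem_cons.mp h with rfl | h
        · exact le_refl _
        · exact le_of_lt (hS z h)
    have hx'r : x' ∈ r := by rw [hrr]; simp
    have hαe : x < e → x' ≤ e := fun hxe' => hmin e he hxe'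
    have hx'y : x' < y := by
      have hxe' : x < e := by
        rcases eq_or_lt_of_le hxe with rfl | h
        · exact absurd he hxnr
        · exact h
      exact lt_of_le_of_lt (hαe hxe') hey
    have hchar : ∀ z ∈ (insRow x r).1, z = x ∨ (z ∈ r ∧ z ≠ x') := by
      rw [hins, hrr]
      intro z hz
      rcases List.mem_append.mp hz with h | h
      · exact Or.inr ⟨by simp [h], by have := hA z h; omega⟩
      · rcases List.mem_cons.mp h with rfl | h
        · exact Or.inl rfl
        · exact Or.inr ⟨by simp [h], by have := hS z h; omega⟩
    rcases sorted_split3 hSs y with hally | ⟨A', S', hSS, hA', hS'⟩ | ⟨A', z, S', hSS, hA', hyz, hS'⟩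
    · -- y appends
      have hally' : ∀ w ∈ r, w < y := by
        rw [hrr]
        exact forall_lt_append (fun w hw => lt_trans (hA w hw) hxy)
          (forall_lt_cons hx'y (fun w hw => hally w hw))
      have hiy : insRow y r = (r ++ [y], none) := insRow_all_lt hally'
      have hAxS : ∀ w ∈ A ++ x :: S, w < y :=
        forall_lt_append (fun w hw => lt_trans (hA w hw) hxy)
          (forall_lt_cons hxy (fun w hw => hally w hw))
      have hiyx : insRow y (A ++ x :: S) = ((A ++ x :: S) ++ [y], none) := insRow_all_lt hAxS
      have hixy : insRow x (r ++ [y]) = ((A ++ x :: S) ++ [y], some x') := by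
        have e1 : r ++ [y] = A ++ x' :: (S ++ [y]) := by rw [hrr]; simp
        have e2 : A ++ x :: (S ++ [y]) = (A ++ x :: S) ++ [y] := by simp
        rw [e1, insRow_at_bump hA hxx', e2]
      refine ⟨x', (A ++ x :: S) ++ [y], by rw [hins], ?_, ?_, hxx', hαe,
        Or.inr ⟨hxnr, hx'r, hmin, hchar⟩⟩
      · rw [hins, hiyx, hiy]
      · rw [hiy]
        exact hixy
    · -- y ∈ S
      have hprefA : ∀ w ∈ A ++ x' :: A', w < y :=
        forall_lt_append (fun w hw => lt_trans (hA w hw) hxy) (forall_lt_cons hx'y hA')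
      have hprefB : ∀ w ∈ A ++ x :: A', w < y :=
        forall_lt_append (fun w hw => lt_trans (hA w hw) hxy) (forall_lt_cons hxy hA')
      have e1 : r = (A ++ x' :: A') ++ y :: S' := by rw [hrr, hSS]; simp
      have hiy : insRow y r = (r, some (y + 1)) := by
        rw [e1, insRow_at_special hprefA, ← e1]
      have e2 : A ++ x :: S = (A ++ x :: A') ++ y :: S' := by rw [hSS]; simp
      have hiyx : insRow y (A ++ x :: S) = (A ++ x :: S, some (y + 1)) := by
        rw [e2, insRow_at_special hprefB, ← e2]
      refine ⟨x', A ++ x :: S, by rw [hins], ?_, ?_, hxx', hαe,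
        Or.inr ⟨hxnr, hx'r, hmin, hchar⟩⟩
      · rw [hins, hiy, hiyx]
      · rw [hiy, hins]
    · -- y bumps z ∈ S
      have hprefA : ∀ w ∈ A ++ x' :: A', w < y :=
        forall_lt_append (fun w hw => lt_trans (hA w hw) hxy) (forall_lt_cons hx'y hA')
      have hprefB : ∀ w ∈ A ++ x :: A', w < y :=
        forall_lt_append (fun w hw => lt_trans (hA w hw) hxy) (forall_lt_cons hxy hA')
      have e1 : r = (A ++ x' :: A') ++ z :: S' := by rw [hrr, hSS]; simp
      have hiy : insRow y r = ((A ++ x' :: A') ++ y :: S', some z) := by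
        rw [e1, insRow_at_bump hprefA hyz]
      have e2 : A ++ x :: S = (A ++ x :: A') ++ z :: S' := by rw [hSS]; simp
      have hiyx : insRow y (A ++ x :: S) = ((A ++ x :: A') ++ y :: S', some z) := by
        rw [e2, insRow_at_bump hprefB hyz]
      have hixy : insRow x ((A ++ x' :: A') ++ y :: S') = ((A ++ x :: A') ++ y :: S', some x') := by
        have e3 : (A ++ x' :: A') ++ y :: S' = A ++ x' :: (A' ++ y :: S') := by simp
        have e4 : A ++ x :: (A' ++ y :: S') = (A ++ x :: A') ++ y :: S' := by simp
        rw [e3, insRow_at_bump hA hxx', e4]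
      refine ⟨x', (A ++ x :: A') ++ y :: S', by rw [hins], ?_, ?_, hxx', hαe,
        Or.inr ⟨hxnr, hx'r, hmin, hchar⟩⟩
      · rw [hins, hiyx, hiy]
      · rw [hiy]
        exact hixy

end EGaux

namespace EGaux

open List

/-- The three elementary 3-letter Coxeter–Knuth patterns. -/
inductive Rel3 : List ℤ → List ℤ → Prop
  | p1 {a b c : ℤ} (h1 : a < b) (h2 : b < c) : Rel3 [a, c, b] [c, a, b]
  | p2 {a b c : ℤ} (h1 : a < b) (h2 : b < c) : Rel3 [b, c, a] [b, a, c]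
  | p3 (a : ℤ) : Rel3 [a, a + 1, a] [a + 1, a, a + 1]

lemma rel3_length {m1 m2 : List ℤ} (h : Rel3 m1 m2) : m1.length = 3 ∧ m2.length = 3 := by
  cases h <;> simp

lemma rel3_ne_nil {m1 m2 : List ℤ} (h : Rel3 m1 m2) : m1 ≠ [] := by
  cases h <;> simp

lemma rel3_wordProd {m1 m2 : List ℤ} (h : Rel3 m1 m2) : wordProd m1 = wordProd m2 := by
  cases h with
  | p1 h1 h2 =>
    rename_i a b c
    simp only [wordProd_cons, wordProd_nil, mul_one]
    rw [← mul_assoc, ← mul_assoc, sT_comm (show a + 2 ≤ c ∨ c + 2 ≤ a by omega), mul_assoc]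
  | p2 h1 h2 =>
    rename_i a b c
    simp only [wordProd_cons, wordProd_nil, mul_one]
    congr 1
    exact sT_comm (show c + 2 ≤ a ∨ a + 2 ≤ c by omega)
  | p3 a =>
    have := wordProd_braid_ctx [] [] (a := a) (b := a + 1) (Or.inl rfl)
    simpa using this

lemma insRow_none_fst {t : ℤ} {ρ : List ℤ} (h : (insRow t ρ).2 = none) :
    (insRow t ρ).1 = ρ ++ [t] := by
  have := insRow_all_lt (insRow_none_lt h)
  rw [this]

lemma pair_eta {p : List ℤ × Option ℤ} : p = (p.1, p.2) := rfl

/-- Key row lemma, pattern (2): `[b, c, a]` vs `[b, a, c]`. -/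
lemma keyrow2 {r : List ℤ} (hr : r.Pairwise (· < ·)) {a b c : ℤ} (h1 : a < b) (h2 : b < c) :
    Contr (r ++ [b, c, a]) ∨
    ((rowIns r [b, c, a]).1 = (rowIns r [b, a, c]).1 ∧
     ((rowIns r [b, c, a]).2 = (rowIns r [b, a, c]).2 ∨
      Rel3 (rowIns r [b, c, a]).2 (rowIns r [b, a, c]).2)) := by
  rcases rb1 hr b with hc | ⟨hs1, -⟩
  · left
    have h := contr_context hc [] [c, a]
    simpa using h
  · have hb_mem : b ∈ (insRow b r).1 := insRow_self_mem b r
    obtain ⟨α, r3, hα, hyx, hxy', hxα, hαb, -⟩ :=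
      disj hs1 (lt_trans h1 h2) hb_mem (le_of_lt h1) h2
    have e1 : insRow b r = ((insRow b r).1, (insRow b r).2) := rfl
    have e2 : insRow c (insRow b r).1
        = ((insRow c (insRow b r).1).1, (insRow c (insRow b r).1).2) := rfl
    have e2' : insRow a (insRow b r).1 = ((insRow a (insRow b r).1).1, some α) := by
      rw [← hα]
    have hA3 := rowIns_three e1 e2 hxy'
    have hB3 := rowIns_three e1 e2' hyx
    right
    constructor
    · rw [hA3, hB3]
    · rcases hoc : (insRow c (insRow b r).1).2 with _ | γ
      · left
        rw [hA3, hB3, hoc]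
        simp
      · rcases hob : (insRow b r).2 with _ | β
        · exfalso
          have hlt : ∀ z ∈ r, z < b := insRow_none_lt hob
          have hfst : (insRow b r).1 = r ++ [b] := insRow_none_fst hob
          have hall : ∀ z ∈ (insRow b r).1, z < c := by
            rw [hfst]
            exact forall_lt_append (fun z hz => lt_trans (hlt z hz) h2)
              (fun z hz => by rw [List.mem_singleton.mp hz]; exact h2)
          rw [insRow_all_lt hall] at hoc
          simp at hoc
        · right
          rw [hA3, hB3, hoc, hob]
          have hαβ : α < β := lt_of_le_of_lt (hαb h1) (insRow_snd_gt hob)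
          have hβγ : β < γ := seq hr h2 hob hoc
          simpa using Rel3.p2 hαβ hβγ

/-- Key row lemma, pattern (3): braid `[a, a+1, a]` vs `[a+1, a, a+1]`. -/
lemma keyrow3 {r : List ℤ} (hr : r.Pairwise (· < ·)) (a : ℤ) :
    Contr (r ++ [a, a + 1, a]) ∨
    ((rowIns r [a, a + 1, a]).1 = (rowIns r [a + 1, a, a + 1]).1 ∧
     ((rowIns r [a, a + 1, a]).2 = (rowIns r [a + 1, a, a + 1]).2 ∨
      Rel3 (rowIns r [a, a + 1, a]).2 (rowIns r [a + 1, a, a + 1]).2)) := by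
  set b : ℤ := a + 1 with hb
  rcases sorted_split3 hr a with hall | ⟨A, S, hrr, hA, hS⟩ | ⟨A, y, S, hrr, hA, hay, hS⟩
  · -- case 1 : all entries < a
    right
    have hallb : ∀ z ∈ r, z < b := fun z hz => by have := hall z hz; omega
    have i1 : insRow a r = (r ++ [a], none) := insRow_all_lt hall
    have i2 : insRow b (r ++ [a]) = ((r ++ [a]) ++ [b], none) := by
      refine insRow_all_lt (forall_lt_append hallb ?_)
      intro z hz; rw [List.mem_singleton.mp hz]; omega
    have i3 : insRow a ((r ++ [a]) ++ [b]) = (r ++ a :: [b], some b) := by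
      have e : (r ++ [a]) ++ [b] = r ++ a :: [b] := by simp
      rw [e, insRow_at_special hall]
    have j1 : insRow b r = (r ++ [b], none) := insRow_all_lt hallb
    have j2 : insRow a (r ++ [b]) = (r ++ a :: [], some b) := by
      have e : r ++ [b] = r ++ b :: [] := rfl
      rw [e, insRow_at_bump hall (by omega)]
    have j3 : insRow b (r ++ a :: []) = ((r ++ a :: []) ++ [b], none) := by
      refine insRow_all_lt (forall_lt_append hallb ?_)
      intro z hz; rcases List.mem_cons.mp hz with rfl | hz
      · omega
      · simp at hz
    have hA3 := rowIns_three i1 i2 i3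
    have hB3 := rowIns_three j1 j2 j3
    rw [hA3, hB3]
    exact ⟨by simp, Or.inl (by simp)⟩
  · -- case 2 : a ∈ r
    have hSs : S.Pairwise (· < ·) := (sorted_of_append_middle (hrr ▸ hr)).2.1
    rcases sorted_split3 hSs b with hallS | ⟨A', S', hSS, hA', hS'⟩ | ⟨A', w, S', hSS, hA', hbw, hS'⟩
    · -- 2a : S = [] forced, contradiction with contr
      left
      have hSnil : S = [] := by
        cases S with
        | nil => rfl
        | cons s S0 =>
          have h1 := hS s (by simp)
          have h2 := hallS s (by simp)
          omega
      subst hSnil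
      have e : r ++ [a, b, a] = A ++ a :: a :: (b :: a :: []) := by rw [hrr]; simp
      rw [e]
      exact contr_adj A (b :: a :: []) a
    · -- 2b : b ∈ S, hence S = b :: S'
      have hA'nil : A' = [] := by
        cases A' with
        | nil => rfl
        | cons p A0 =>
          have h1 := hS p (by rw [hSS]; simp)
          have h2 := hA' p (by simp)
          omega
      subst hA'nil
      simp only [List.nil_append] at hSS
      subst hSS
      right
      have hpre : ∀ z ∈ A ++ [a], z < b := by
        refine forall_lt_append (fun z hz => by have := hA z hz; omega) ?_
        intro z hz; rw [List.mem_singleton.mp hz]; omega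
      have i1 : insRow a r = (r, some b) := by
        rw [hrr]; rw [insRow_at_special hA]
      have i2 : insRow b r = (r, some (b + 1)) := by
        have e : r = (A ++ [a]) ++ b :: S' := by rw [hrr]; simp
        rw [e, insRow_at_special hpre]
      have hA3 := rowIns_three i1 i2 i1
      have hB3 := rowIns_three i2 i1 i2
      rw [hA3, hB3]
      refine ⟨rfl, Or.inr ?_⟩
      simpa using Rel3.p3 b
    · -- 2c : S = w :: S' with b < w
      have hA'nil : A' = [] := by
        cases A' with
        | nil => rfl
        | cons p A0 =>
          have h1 := hS p (by rw [hSS]; simp)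
          have h2 := hA' p (by simp)
          omega
      subst hA'nil
      simp only [List.nil_append] at hSS
      subst hSS
      have hpre : ∀ z ∈ A ++ [a], z < b := by
        refine forall_lt_append (fun z hz => by have := hA z hz; omega) ?_
        intro z hz; rw [List.mem_singleton.mp hz]; omega
      by_cases hw : w = b + 1
      · -- braid recursion
        right
        have i1 : insRow a r = (r, some b) := by
          rw [hrr]; rw [insRow_at_special hA]
        have i2 : insRow b r = ((A ++ [a]) ++ b :: S', some w) := by
          have e : r = (A ++ [a]) ++ w :: S' := by rw [hrr]; simp
          rw [e, insRow_at_bump hpre hbw]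
        have i3 : insRow a ((A ++ [a]) ++ b :: S') = ((A ++ [a]) ++ b :: S', some b) := by
          have e : (A ++ [a]) ++ b :: S' = A ++ a :: (b :: S') := by simp
          rw [e, insRow_at_special hA, ← e]
        have i4 : insRow b ((A ++ [a]) ++ b :: S') = ((A ++ [a]) ++ b :: S', some (b + 1)) := by
          rw [insRow_at_special hpre]
        have hA3 := rowIns_three i1 i2 i3
        have hB3 := rowIns_three i2 i3 i4
        rw [hA3, hB3]
        refine ⟨rfl, Or.inr ?_⟩
        rw [hw]
        simpa using Rel3.p3 b
      · -- contractible
        left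
        have e : r ++ [a, b, a] = A ++ a :: ((w :: S') ++ a :: (b :: a :: [])) := by
          rw [hrr]; simp
        rw [e]
        refine contr_sep A (w :: S') (b :: a :: []) a ?_
        intro z hz
        rcases List.mem_cons.mp hz with rfl | hz
        · right; omega
        · have := hS' z hz; right; omega
  · -- case 3 : a ∉ r, first entry above a is y
    have hSs : S.Pairwise (· < ·) := (sorted_of_append_middle (hrr ▸ hr)).2.1
    by_cases hyb : y = b
    · -- 3a : y = b
      subst hyb
      cases S with
      | nil =>
        left
        have e : r ++ [a, b, a] = A ++ b :: a :: b :: a :: [] := by rw [hrr]; simp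
        rw [e]
        exact contr_braid4 A [] (Or.inl hb)
      | cons w S' =>
        have hbw : b < w := hS w (by simp)
        have hS'w : ∀ z ∈ S', w < z := (List.pairwise_cons.mp hSs).1
        have hpre : ∀ z ∈ A ++ [a], z < b := by
          refine forall_lt_append (fun z hz => by have := hA z hz; omega) ?_
          intro z hz; rw [List.mem_singleton.mp hz]; omega
        by_cases hw : w = b + 1
        · right
          have i1 : insRow a r = (A ++ a :: (w :: S'), some b) := by
            rw [hrr]; rw [insRow_at_bump hA hay]
          have i2 : insRow b (A ++ a :: (w :: S')) = ((A ++ [a]) ++ b :: S', some w) := by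
            have e : A ++ a :: (w :: S') = (A ++ [a]) ++ w :: S' := by simp
            rw [e, insRow_at_bump hpre hbw]
          have i3 : insRow a ((A ++ [a]) ++ b :: S') = ((A ++ [a]) ++ b :: S', some b) := by
            have e : (A ++ [a]) ++ b :: S' = A ++ a :: (b :: S') := by simp
            rw [e, insRow_at_special hA, ← e]
          have i4 : insRow b r = (r, some (b + 1)) := by
            rw [hrr]
            exact insRow_at_special (fun z hz => by have := hA z hz; omega) _
          have i1' : insRow b ((A ++ [a]) ++ b :: S')
              = ((A ++ [a]) ++ b :: S', some (b + 1)) := insRow_at_special hpre _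
          have hA3 := rowIns_three i1 i2 i3
          have hB3 := rowIns_three i4 i1 i2
          rw [hA3, hB3]
          refine ⟨rfl, Or.inr ?_⟩
          rw [hw]
          simpa using Rel3.p3 b
        · -- w ≥ b + 2 : contractible via braid rewrite
          left
          have hlen : (r ++ [a, b, a]).length = (r ++ [b, a, b]).length := by simp
          have hwp : wordProd (r ++ [a, b, a]) = wordProd (r ++ [b, a, b]) := by
            have e1 : r ++ [a, b, a] = r ++ a :: b :: a :: [] := rfl
            have e2 : r ++ [b, a, b] = r ++ b :: a :: b :: [] := rfl
            rw [e1, e2]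
            exact wordProd_braid_ctx r [] (Or.inl hb)
          refine contr_transfer hwp hlen ?_
          have e : r ++ [b, a, b] = A ++ b :: ((w :: S') ++ b :: (a :: b :: [])) := by
            rw [hrr]; simp
          rw [e]
          refine contr_sep A (w :: S') (a :: b :: []) b ?_
          intro z hz
          rcases List.mem_cons.mp hz with rfl | hz
          · right; omega
          · have := hS'w z hz; right; omega
    · -- 3b : y ≥ b + 1 = a + 2
      have hby : b < y := by
        have : a < y := hay
        omega
      cases S with
      | nil =>
        right
        have i1 : insRow a r = (A ++ a :: [], some y) := by
          rw [hrr]; rw [insRow_at_bump hA hay]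
        have i2 : insRow b (A ++ a :: []) = ((A ++ a :: []) ++ [b], none) := by
          refine insRow_all_lt ?_
          intro z hz
          rcases List.mem_append.mp hz with h | h
          · have := hA z h; omega
          · rcases List.mem_cons.mp h with rfl | h
            · omega
            · simp at h
        have i3 : insRow a ((A ++ a :: []) ++ [b]) = (A ++ a :: [b], some b) := by
          have e : (A ++ a :: []) ++ [b] = A ++ a :: [b] := by simp
          rw [e, insRow_at_special hA]
        have j1 : insRow b r = (A ++ b :: [], some y) := by
          rw [hrr]
          exact insRow_at_bump (fun z hz => by have := hA z hz; omega) hby _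
        have j2 : insRow a (A ++ b :: []) = (A ++ a :: [], some b) := by
          rw [insRow_at_bump hA (by omega)]
        have hA3 := rowIns_three i1 i2 i3
        have hB3 := rowIns_three j1 j2 i2
        rw [hA3, hB3]
        exact ⟨by simp, Or.inl (by simp)⟩
      | cons w S' =>
        right
        have hyw : y < w := hS w (by simp)
        have hbw : b < w := by omega
        have hpre : ∀ z ∈ A ++ [a], z < b := by
          refine forall_lt_append (fun z hz => by have := hA z hz; omega) ?_
          intro z hz; rw [List.mem_singleton.mp hz]; omega
        have i1 : insRow a r = (A ++ a :: (w :: S'), some y) := by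
          rw [hrr]; rw [insRow_at_bump hA hay]
        have i2 : insRow b (A ++ a :: (w :: S')) = ((A ++ [a]) ++ b :: S', some w) := by
          have e : A ++ a :: (w :: S') = (A ++ [a]) ++ w :: S' := by simp
          rw [e, insRow_at_bump hpre hbw]
        have i3 : insRow a ((A ++ [a]) ++ b :: S') = ((A ++ [a]) ++ b :: S', some b) := by
          have e : (A ++ [a]) ++ b :: S' = A ++ a :: (b :: S') := by simp
          rw [e, insRow_at_special hA, ← e]
        have j1 : insRow b r = (A ++ b :: (w :: S'), some y) := by
          rw [hrr]
          exact insRow_at_bump (fun z hz => by have := hA z hz; omega) hby _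
        have j2 : insRow a (A ++ b :: (w :: S')) = (A ++ a :: (w :: S'), some b) := by
          rw [insRow_at_bump hA (by omega)]
        have hA3 := rowIns_three i1 i2 i3
        have hB3 := rowIns_three j1 j2 i2
        rw [hA3, hB3]
        refine ⟨rfl, Or.inr ?_⟩
        simpa using Rel3.p2 (show b < y from hby) (show y < w from hyw)

end EGaux

namespace EGaux

open List

/-- Pattern (1) in the presence of a row entry `e ∈ [a, c)`. -/
lemma keyrow1_disj {r : List ℤ} (hr : r.Pairwise (· < ·)) {a b c e : ℤ} (h1 : a < b) (h2 : b < c)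
    (he : e ∈ r) (hxe : a ≤ e) (hey : e < c) :
    Contr (r ++ [a, c, b]) ∨
    ((rowIns r [a, c, b]).1 = (rowIns r [c, a, b]).1 ∧
     ((rowIns r [a, c, b]).2 = (rowIns r [c, a, b]).2 ∨
      Rel3 (rowIns r [a, c, b]).2 (rowIns r [c, a, b]).2)) := by
  have hac : a < c := lt_trans h1 h2
  obtain ⟨α, r3, hα, hyx, hxy', hxα, hαe, hcases⟩ := disj hr hac he hxe hey
  rcases rb1 hr a with hca | ⟨hsa, hcka⟩
  · left
    have h := contr_context hca [] [c, b]
    simpa using h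
  · simp only [hα, Option.toList_some, List.singleton_append] at hcka
    rcases rb1 hsa c with hcc | ⟨hsc, -⟩
    · left
      have h3 : Contr ([α] ++ ((insRow a r).1 ++ [c]) ++ [b]) := contr_context hcc [α] [b]
      have hip : wordProd (r ++ [a, c, b]) = wordProd ([α] ++ ((insRow a r).1 ++ [c]) ++ [b]) := by
        have e1 : r ++ [a, c, b] = (r ++ [a]) ++ [c, b] := by simp
        have e2 : [α] ++ ((insRow a r).1 ++ [c]) ++ [b] = (α :: (insRow a r).1) ++ [c, b] := by
          simp
        rw [e1, e2, wordProd_append (r ++ [a]), wordProd_append (α :: (insRow a r).1),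
          ckeq_wordProd hcka]
      have hil : (r ++ [a, c, b]).length = ([α] ++ ((insRow a r).1 ++ [c]) ++ [b]).length := by
        have hl := ckeq_length hcka
        simp only [List.length_append, List.length_cons, List.length_nil] at hl ⊢
        omega
      exact contr_transfer hip hil h3
    · right
      have e1 : insRow a r = ((insRow a r).1, some α) := by rw [← hα]
      have e3 : insRow b r3 = ((insRow b r3).1, (insRow b r3).2) := rfl
      have e1c : insRow c r = ((insRow c r).1, (insRow c r).2) := rfl
      have hA3 := rowIns_three e1 hyx e3
      have hB3 := rowIns_three e1c hxy' e3
      constructor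
      · rw [hA3, hB3]
      · rcases hoc : (insRow c r).2 with _ | γ
        · left
          rw [hA3, hB3, hoc]
          simp
        · have hfst : (insRow c (insRow a r).1).1 = r3 := by rw [hyx]
          have hr3c : c ∈ r3 := by
            have h := insRow_self_mem c (insRow a r).1
            rwa [hfst] at h
          have hsc3 : r3.Pairwise (· < ·) := by rwa [hfst] at hsc
          obtain ⟨δ, hδ, hδc⟩ := insRow_out_le hsc3 hr3c h2
          have hδb : b < δ := insRow_snd_gt hδ
          have hγc : c < γ := insRow_snd_gt hoc
          have hδγ : δ < γ := by omega
          have hαδ : α < δ := by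
            rcases hcases with ⟨hα1, -⟩ | ⟨hanr, hαr, hmin, hchar⟩
            · omega
            · by_cases hαb : α ≤ b
              · omega
              · have hae' : a < e := lt_of_le_of_ne hxe (fun h => hanr (h ▸ he))
                have hαec : α < c := lt_of_le_of_lt (hαe hae') hey
                rcases insRow_snd_cases hδ with ⟨hbm, -⟩ | ⟨hδm, hδgt⟩
                · exfalso
                  have hb3 : b ∈ (insRow c (insRow a r).1).1 := by rw [hfst]; exact hbm
                  rcases insRow_fst_mem hb3 with hbc | hmem
                  · omega
                  · rcases hchar b hmem with hba | ⟨hbr, -⟩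
                    · omega
                    · have := hmin b hbr h1
                      omega
                · have hδ3 : δ ∈ (insRow c (insRow a r).1).1 := by rw [hfst]; exact hδm
                  rcases insRow_fst_mem hδ3 with hδeq | hmem
                  · omega
                  · rcases hchar δ hmem with hδa | ⟨hδr, hδα⟩
                    · omega
                    · have := hmin δ hδr (by omega)
                      omega
          right
          rw [hA3, hB3, hoc, hδ]
          simpa using Rel3.p1 hαδ hδγ

end EGaux

namespace EGaux

open List

/-- Key row lemma, pattern (1): `[a, c, b]` vs `[c, a, b]`. -/
lemma keyrow1 {r : List ℤ} (hr : r.Pairwise (· < ·)) {a b c : ℤ} (h1 : a < b) (h2 : b < c) :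
    Contr (r ++ [a, c, b]) ∨
    ((rowIns r [a, c, b]).1 = (rowIns r [c, a, b]).1 ∧
     ((rowIns r [a, c, b]).2 = (rowIns r [c, a, b]).2 ∨
      Rel3 (rowIns r [a, c, b]).2 (rowIns r [c, a, b]).2)) := by
  have hac : a < c := lt_trans h1 h2
  -- First decide whether some entry lies in [a, c).
  rcases sorted_split3 hr a with hall | ⟨A, S, hrr, hA, hS⟩ | ⟨A, y, S, hrr, hA, hay, hS⟩
  · -- N1 : all entries < a
    right
    have hallb : ∀ z ∈ r, z < b := fun z hz => lt_trans (hall z hz) h1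
    have hallc : ∀ z ∈ r, z < c := fun z hz => lt_trans (hall z hz) hac
    have i1 : insRow a r = (r ++ [a], none) := insRow_all_lt hall
    have i2 : insRow c (r ++ [a]) = ((r ++ [a]) ++ [c], none) := by
      refine insRow_all_lt (forall_lt_append hallc ?_)
      intro z hz; rw [List.mem_singleton.mp hz]; omega
    have i3 : insRow b ((r ++ [a]) ++ [c]) = ((r ++ [a]) ++ b :: [], some c) := by
      refine insRow_at_bump (forall_lt_append hallb ?_) h2 []
      intro z hz; rw [List.mem_singleton.mp hz]; omega
    have j1 : insRow c r = (r ++ [c], none) := insRow_all_lt hallc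
    have j2 : insRow a (r ++ [c]) = (r ++ a :: [], some c) := by
      have e : r ++ [c] = r ++ c :: [] := rfl
      rw [e, insRow_at_bump hall hac]
    have j3 : insRow b (r ++ a :: []) = ((r ++ a :: []) ++ [b], none) := by
      refine insRow_all_lt ?_
      intro z hz
      rcases List.mem_append.mp hz with h | h
      · exact lt_trans (hall z h) h1
      · rcases List.mem_cons.mp h with rfl | h
        · exact h1
        · simp at h
    have hA3 := rowIns_three i1 i2 i3
    have hB3 := rowIns_three j1 j2 j3
    rw [hA3, hB3]
    exact ⟨by simp, Or.inl (by simp)⟩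
  · -- a ∈ r : use commutation with e = a
    have hxe : a ≤ a := le_refl a
    have hae : a ∈ r := by rw [hrr]; simp
    exact keyrow1_disj hr h1 h2 hae hxe hac
  · -- first entry above a is y
    by_cases hyc : y < c
    · exact keyrow1_disj hr h1 h2 (show y ∈ r by rw [hrr]; simp) (le_of_lt hay) hyc
    · -- y ≥ c
      have hSs : S.Pairwise (· < ·) := (sorted_of_append_middle (hrr ▸ hr)).2.1
      by_cases hyc' : y = c
      · -- N2 : y = c
        have hrr2 : r = A ++ c :: S := by rw [← hyc']; exact hrr
        have hS2 : ∀ z ∈ S, c < z := by rw [← hyc']; exact hS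
        cases S with
        | nil =>
          left
          have e : r ++ [a, c, b] = A ++ c :: ([a] ++ c :: [b]) := by rw [hrr2]; simp
          rw [e]
          refine contr_sep A [a] [b] c ?_
          intro z hz
          rw [List.mem_singleton.mp hz]
          left; omega
        | cons w S' =>
          have hcw : c < w := hS2 w (by simp)
          have hS'w : ∀ z ∈ S', w < z := (List.pairwise_cons.mp hSs).1
          by_cases hw : w = c + 1
          · right
            have hpreA : ∀ z ∈ A ++ [a], z < c := by
              refine forall_lt_append (fun z hz => lt_trans (hA z hz) hac) ?_
              intro z hz; rw [List.mem_singleton.mp hz]; exact hac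
            have hpreAb : ∀ z ∈ A ++ [a], z < b := by
              refine forall_lt_append (fun z hz => lt_trans (hA z hz) h1) ?_
              intro z hz; rw [List.mem_singleton.mp hz]; exact h1
            have i1 : insRow a r = (A ++ a :: (w :: S'), some c) := by
              rw [hrr2]; rw [insRow_at_bump hA hac]
            have i2 : insRow c (A ++ a :: (w :: S')) = ((A ++ [a]) ++ c :: S', some w) := by
              have e : A ++ a :: (w :: S') = (A ++ [a]) ++ w :: S' := by simp
              rw [e, insRow_at_bump hpreA hcw]
            have i3 : insRow b ((A ++ [a]) ++ c :: S') = ((A ++ [a]) ++ b :: S', some c) := by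
              rw [insRow_at_bump hpreAb h2]
            have j1 : insRow c r = (r, some (c + 1)) := by
              rw [hrr2]
              exact insRow_at_special (fun z hz => lt_trans (hA z hz) hac) _
            have j2 : insRow a r = (A ++ a :: (w :: S'), some c) := i1
            have j3 : insRow b (A ++ a :: (w :: S')) = ((A ++ [a]) ++ b :: S', some w) := by
              have e : A ++ a :: (w :: S') = (A ++ [a]) ++ w :: S' := by simp
              rw [e, insRow_at_bump hpreAb (by omega)]
            have hA3 := rowIns_three i1 i2 i3
            have hB3 := rowIns_three j1 j2 j3
            rw [hA3, hB3]
            refine ⟨rfl, Or.inr ?_⟩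
            rw [hw]
            simpa using Rel3.p3 c
          · left
            have e : r ++ [a, c, b] = A ++ c :: (((w :: S') ++ [a]) ++ c :: [b]) := by
              rw [hrr2]; simp
            rw [e]
            refine contr_sep A ((w :: S') ++ [a]) [b] c ?_
            intro z hz
            rcases List.mem_append.mp hz with h | h
            · rcases List.mem_cons.mp h with rfl | h
              · right; omega
              · have := hS'w z h; right; omega
            · rw [List.mem_singleton.mp h]; left; omega
      · -- N3 : y > c
        have hcy : c < y := by omega
        right
        have hAb : ∀ z ∈ A, z < b := fun z hz => lt_trans (hA z hz) h1
        have hAc : ∀ z ∈ A, z < c := fun z hz => lt_trans (hA z hz) hac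
        have hpreAb : ∀ z ∈ A ++ [a], z < b := by
          refine forall_lt_append hAb ?_
          intro z hz; rw [List.mem_singleton.mp hz]; exact h1
        have hpreAc : ∀ z ∈ A ++ [a], z < c := by
          refine forall_lt_append hAc ?_
          intro z hz; rw [List.mem_singleton.mp hz]; exact hac
        cases S with
        | nil =>
          have i1 : insRow a r = (A ++ a :: [], some y) := by
            rw [hrr]; rw [insRow_at_bump hA hay]
          have i2 : insRow c (A ++ a :: []) = ((A ++ a :: []) ++ [c], none) := by
            refine insRow_all_lt ?_
            intro z hz
            rcases List.mem_append.mp hz with h | h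
            · exact hAc z h
            · rcases List.mem_cons.mp h with rfl | h
              · exact hac
              · simp at h
          have i3 : insRow b ((A ++ a :: []) ++ [c]) = ((A ++ [a]) ++ b :: [], some c) := by
            have e : (A ++ a :: []) ++ [c] = (A ++ [a]) ++ c :: [] := by simp
            rw [e, insRow_at_bump hpreAb h2]
          have j1 : insRow c r = (A ++ c :: [], some y) := by
            rw [hrr]; rw [insRow_at_bump hAc hcy]
          have j2 : insRow a (A ++ c :: []) = (A ++ a :: [], some c) := by
            rw [insRow_at_bump hA hac]
          have j3 : insRow b (A ++ a :: []) = ((A ++ a :: []) ++ [b], none) := by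
            refine insRow_all_lt ?_
            intro z hz
            rcases List.mem_append.mp hz with h | h
            · exact hAb z h
            · rcases List.mem_cons.mp h with rfl | h
              · exact h1
              · simp at h
          have hA3 := rowIns_three i1 i2 i3
          have hB3 := rowIns_three j1 j2 j3
          rw [hA3, hB3]
          exact ⟨by simp, Or.inl (by simp)⟩
        | cons w S' =>
          have hyw : y < w := hS w (by simp)
          have i1 : insRow a r = (A ++ a :: (w :: S'), some y) := by
            rw [hrr]; rw [insRow_at_bump hA hay]
          have i2 : insRow c (A ++ a :: (w :: S')) = ((A ++ [a]) ++ c :: S', some w) := by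
            have e : A ++ a :: (w :: S') = (A ++ [a]) ++ w :: S' := by simp
            rw [e, insRow_at_bump hpreAc (by omega)]
          have i3 : insRow b ((A ++ [a]) ++ c :: S') = ((A ++ [a]) ++ b :: S', some c) := by
            rw [insRow_at_bump hpreAb h2]
          have j1 : insRow c r = (A ++ c :: (w :: S'), some y) := by
            rw [hrr]; rw [insRow_at_bump hAc hcy]
          have j2 : insRow a (A ++ c :: (w :: S')) = (A ++ a :: (w :: S'), some c) := by
            rw [insRow_at_bump hA hac]
          have j3 : insRow b (A ++ a :: (w :: S')) = ((A ++ [a]) ++ b :: S', some w) := by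
            have e : A ++ a :: (w :: S') = (A ++ [a]) ++ w :: S' := by simp
            rw [e, insRow_at_bump hpreAb (by omega)]
          have hA3 := rowIns_three i1 i2 i3
          have hB3 := rowIns_three j1 j2 j3
          rw [hA3, hB3]
          refine ⟨rfl, Or.inr ?_⟩
          simpa using Rel3.p2 (show c < y from hcy) (show y < w from hyw)

end EGaux

namespace EGaux

open List

lemma keyrow {r : List ℤ} (hr : r.Pairwise (· < ·)) {m1 m2 : List ℤ} (h : Rel3 m1 m2) :
    Contr (r ++ m1) ∨
    ((rowIns r m1).1 = (rowIns r m2).1 ∧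
     ((rowIns r m1).2 = (rowIns r m2).2 ∨ Rel3 (rowIns r m1).2 (rowIns r m2).2)) := by
  cases h with
  | p1 h1 h2 => exact keyrow1 hr h1 h2
  | p2 h1 h2 => exact keyrow2 hr h1 h2
  | p3 a => exact keyrow3 hr a

lemma red_transfer_app {p m1 m2 : List ℤ} (hp : wordProd m1 = wordProd m2)
    (hl : m1.length = m2.length) (h : Red (p ++ m1)) : Red (p ++ m2) := by
  intro m hm
  have h2 : wordProd m = wordProd (p ++ m1) := by
    rw [hm, wordProd_append, wordProd_append, hp]
  have := h m h2
  simp only [List.length_append] at *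
  omega

lemma keyT : ∀ (Q : List (List ℤ)), rowsSorted Q → ∀ m1 m2 : List ℤ, Rel3 m1 m2 →
    Red (rowword Q ++ m1) → insW Q m1 = insW Q m2 := by
  intro Q
  induction Q with
  | nil =>
    intro _ m1 m2 h hred
    have hredm : Red m1 := by simpa [rowword_nil] using hred
    rcases keyrow (by simp : ([] : List ℤ).Pairwise (· < ·)) h with hc | ⟨hrows, hbump⟩
    · exact absurd (by simpa using hc) (red_not_contr hredm)
    · have hm1 : m1 ≠ [] := rel3_ne_nil h
      have hm2 : m2 ≠ [] := by
        have h2 := (rel3_length h).2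
        intro h0
        rw [h0] at h2
        simp at h2
      rw [insW_nil_fact m1 hm1, insW_nil_fact m2 hm2, hrows]
      rcases hbump with heq | hrel
      · rw [heq]
      · exfalso
        have hlen1 : (rowIns [] m1).2.length ≤ 2 := by
          cases m1 with
          | nil => simp at hm1
          | cons x w =>
            rw [rowIns_cons, insRow_nil]
            have h5 := rowIns_len_le w [x]
            have hw : w.length = 2 := by
              have h6 := (rel3_length h).1
              simp only [List.length_cons] at h6
              omega
            simp only [Option.toList_none, List.nil_append]
            omega
        have h7 := (rel3_length hrel).1
        omega
  | cons r Q ih =>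
    intro hQs m1 m2 h hred
    have hr := hQs r (by simp)
    have hredin : Red (rowword Q ++ (r ++ m1)) := by
      have e : rowword (r :: Q) ++ m1 = rowword Q ++ (r ++ m1) := by rw [rowword_cons]; simp
      rwa [e] at hred
    rcases keyrow hr h with hc | ⟨hrows, hbump⟩
    · exact absurd (by simpa using contr_context hc (rowword Q) []) (red_not_contr hredin)
    · rw [insW_cons_fact, insW_cons_fact, hrows]
      rcases hbump with heq | hrel
      · rw [heq]
      · rcases rbm m1 r hr with hc | ⟨-, hck⟩
        · exact absurd (by simpa using contr_context hc (rowword Q) []) (red_not_contr hredin)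
        · have hckfull : CKEquiv (rowword Q ++ (r ++ m1))
              (rowword Q ++ ((rowIns r m1).2 ++ (rowIns r m1).1)) := ckeq_append_left hck _
          have hred2 : Red (rowword Q ++ (rowIns r m1).2) := by
            have h4 := (ckeq_red_iff hckfull).mp hredin
            have e : rowword Q ++ ((rowIns r m1).2 ++ (rowIns r m1).1)
                = (rowword Q ++ (rowIns r m1).2) ++ (rowIns r m1).1 := by simp
            rw [e] at h4
            exact red_prefix h4
          have hrec := ih (fun s hs => hQs s (by simp [hs])) _ _ hrel hred2
          rw [hrec]

lemma pstep_core (u v m1 m2 : List ℤ) (hrel : Rel3 m1 m2 ∨ Rel3 m2 m1)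
    (hred : Red (u ++ m1 ++ v)) : insW [] (u ++ m1 ++ v) = insW [] (u ++ m2 ++ v) := by
  have hredu : Red u := red_prefix (red_prefix hred)
  obtain ⟨hQs, hckq⟩ := mgen [] (by intro s hs; simp at hs) u (by simpa [rowword_nil] using hredu)
  have hckq' : CKEquiv (rowword (insW [] u)) u := by simpa [rowword_nil] using hckq
  have hred_mid1 : Red (rowword (insW [] u) ++ m1) := by
    have hc : CKEquiv (rowword (insW [] u) ++ m1) (u ++ m1) := ckeq_append_right hckq' m1
    exact (ckeq_red_iff hc).mpr (red_prefix hred)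
  have key : insW (insW [] u) m1 = insW (insW [] u) m2 := by
    rcases hrel with hrel | hrel
    · exact keyT _ hQs m1 m2 hrel hred_mid1
    · have hred_mid2 : Red (rowword (insW [] u) ++ m2) :=
        red_transfer_app (rel3_wordProd hrel).symm
          (by have := rel3_length hrel; omega) hred_mid1
      exact (keyT _ hQs m2 m1 hrel hred_mid2).symm
  rw [insW_append, insW_append, insW_append, insW_append, key]

lemma pstep {x y : List ℤ} (h : CKStep x y) (hred : Red x) : insW [] x = insW [] y := by
  cases h with
  | acb u v h1 h2 =>
    rename_i a b c
    have e1 : u ++ a :: c :: b :: v = u ++ [a, c, b] ++ v := by simp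
    have e2 : u ++ c :: a :: b :: v = u ++ [c, a, b] ++ v := by simp
    rw [e1, e2]
    exact pstep_core u v _ _ (Or.inl (Rel3.p1 h1 h2)) (by rwa [e1] at hred)
  | bca u v h1 h2 =>
    rename_i a b c
    have e1 : u ++ b :: c :: a :: v = u ++ [b, c, a] ++ v := by simp
    have e2 : u ++ b :: a :: c :: v = u ++ [b, a, c] ++ v := by simp
    rw [e1, e2]
    exact pstep_core u v _ _ (Or.inl (Rel3.p2 h1 h2)) (by rwa [e1] at hred)
  | braid u v hb =>
    rename_i a b
    have e1 : u ++ a :: b :: a :: v = u ++ [a, b, a] ++ v := by simp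
    have e2 : u ++ b :: a :: b :: v = u ++ [b, a, b] ++ v := by simp
    rw [e1, e2]
    rcases hb with hb | hb
    · subst hb
      exact pstep_core u v _ _ (Or.inl (Rel3.p3 a)) (by rwa [e1] at hred)
    · have ha : a = b + 1 := by omega
      subst ha
      exact pstep_core u v _ _ (Or.inr (Rel3.p3 b)) (by rwa [e1] at hred)

lemma pinv {x y : List ℤ} (h : CKEquiv x y) : Red x → insW [] x = insW [] y := by
  induction h with
  | rel a b hab => exact fun hred => pstep hab hred
  | refl a => exact fun _ => rfl
  | symm a b hab ih =>
    intro hred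
    exact (ih ((ckeq_red_iff hab).mpr hred)).symm
  | trans a b c hab _ ih1 ih2 =>
    intro hred
    exact (ih1 hred).trans (ih2 ((ckeq_red_iff hab).mp hred))

end EGaux

namespace EGaux

open List

lemma rowIns_dominate : ∀ (xs u v : List ℤ), xs.Pairwise (· < ·) →
    (∀ z ∈ u, ∀ x ∈ xs, z < x) → v.length ≤ xs.length →
    (∀ j, j < v.length → xs.getD j 0 < v.getD j 0) →
    rowIns (u ++ v) xs = (u ++ xs, v) := by
  intro xs
  induction xs with
  | nil =>
    intro u v _ _ hlen _
    have hv : v = [] := List.length_eq_zero_iff.mp (by simpa using hlen)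
    subst hv
    simp [rowIns_nil]
  | cons x xs ih =>
    intro u v hs hu hlen hcol
    have hxxs : ∀ z ∈ xs, x < z := (List.pairwise_cons.mp hs).1
    have hs' : xs.Pairwise (· < ·) := (List.pairwise_cons.mp hs).2
    have hu' : ∀ z ∈ u ++ [x], ∀ t ∈ xs, z < t := by
      intro z hz t ht
      rcases List.mem_append.mp hz with h | h
      · exact hu z h t (by simp [ht])
      · rw [List.mem_singleton.mp h]
        exact hxxs t ht
    cases v with
    | nil =>
      have hins : insRow x u = (u ++ [x], none) :=
        insRow_all_lt (fun z hz => hu z hz x (by simp))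
      have hrec := ih (u ++ [x]) [] hs' hu' (by simp) (by simp)
      rw [List.append_nil] at hrec ⊢
      rw [rowIns_cons, hins]
      simp only [Option.toList_none, List.nil_append]
      rw [hrec]
      simp
    | cons v0 v' =>
      have hxv0 : x < v0 := by
        have := hcol 0 (by simp)
        simpa using this
      have hins : insRow x (u ++ v0 :: v') = (u ++ x :: v', some v0) :=
        insRow_at_bump (fun z hz => hu z hz x (by simp)) hxv0 v'
      have hlen' : v'.length ≤ xs.length := by
        simp only [List.length_cons] at hlen
        omega
      have hcol' : ∀ j, j < v'.length → xs.getD j 0 < v'.getD j 0 := by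
        intro j hj
        have := hcol (j + 1) (by simp; omega)
        simpa using this
      have hrec := ih (u ++ [x]) v' hs' hu' hlen' hcol'
      rw [rowIns_cons, hins]
      have e : u ++ x :: v' = (u ++ [x]) ++ v' := by simp
      rw [e, hrec]
      simp

lemma incrTab_tail {r : List ℤ} {Q : List (List ℤ)} (h : IncrTab (r :: Q)) : IncrTab Q := by
  obtain ⟨⟨hne, hlen⟩, hsort, hcol⟩ := h
  refine ⟨⟨fun s hs => hne s (by simp [hs]), ?_⟩, fun s hs => hsort s (by simp [hs]), ?_⟩
  · intro i hi
    have h2 := hlen (i + 1) (by simp only [List.length_cons]; omega)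
    simpa using h2
  · intro i j hi hj
    have h2 := hcol (i + 1) j (by simp only [List.length_cons]; omega)
      (by simpa using hj)
    simpa [entryOf] using h2

lemma insW_dominant : ∀ (Q : List (List ℤ)) (r : List ℤ), IncrTab (r :: Q) → insW Q r = r :: Q := by
  intro Q
  induction Q with
  | nil =>
    intro r hT
    have hrs : r.Pairwise (· < ·) := hT.2.1 r (by simp)
    have hne : r ≠ [] := hT.1.1 r (by simp)
    have hdom := rowIns_dominate r [] [] hrs (by simp) (by simp) (by simp)
    simp only [List.nil_append, List.append_nil] at hdom
    rw [insW_nil_fact r hne, hdom]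
    simp [insW_nil]
  | cons r2 Q2 ih =>
    intro r hT
    have hrs : r.Pairwise (· < ·) := hT.2.1 r (by simp)
    have hlen : r2.length ≤ r.length := by
      have h2 := hT.1.2 0 (by simp)
      simpa using h2
    have hcol : ∀ j, j < r2.length → r.getD j 0 < r2.getD j 0 := by
      intro j hj
      have h2 := hT.2.2 0 j (by simp) (by simpa using hj)
      simpa [entryOf] using h2
    have hdom := rowIns_dominate r [] r2 hrs (by simp) hlen hcol
    simp only [List.nil_append] at hdom
    rw [insW_cons_fact, hdom]
    have := ih r2 (incrTab_tail hT)
    simpa using this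

lemma insW_rowword : ∀ {T : List (List ℤ)}, IncrTab T → insW [] (rowword T) = T := by
  intro T
  induction T with
  | nil => intro _; rfl
  | cons r Q ih =>
    intro hT
    rw [rowword_cons, insW_append, ih (incrTab_tail hT)]
    exact insW_dominant Q r hT

end EGaux

namespace EGaux

open List

/-! ### Sorted-list counting lemmas -/

lemma sorted_getElem_le {C : List ℤ} (hC : C.Pairwise (· < ·)) {i j : ℕ} (hij : i ≤ j)
    (hj : j < C.length) : C[i]'(by omega) ≤ C[j]'hj := by
  rcases Nat.lt_or_ge i j with h | h
  · have := hC.rel_get_of_lt (a := ⟨i, by omega⟩) (b := ⟨j, hj⟩) h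
    simpa [List.get_eq_getElem] using le_of_lt this
  · have : i = j := by omega
    subst this
    exact le_refl _

lemma sorted_take_le {C : List ℤ} (hC : C.Pairwise (· < ·)) {j : ℕ} (hj : j < C.length) :
    ∀ z ∈ C.take (j + 1), z ≤ C.getD j 0 := by
  intro z hz
  obtain ⟨i, hi, hzi⟩ := List.mem_iff_getElem.mp hz
  have hilen : i < C.length := by
    simp only [List.length_take] at hi
    omega
  have hij : i ≤ j := by
    simp only [List.length_take] at hi
    omega
  have he : (C.take (j + 1))[i]'hi = C[i]'hilen := by
    rw [List.getElem_take]
  rw [List.getD_eq_getElem C 0 hj, ← hzi, he]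
  exact sorted_getElem_le hC hij hj

lemma sorted_count_ge {B : List ℤ} (hB : B.Pairwise (· < ·)) {j : ℕ} (hj : j < B.length) {x : ℤ}
    (h : B.getD j 0 < x) : j + 1 ≤ B.countP (fun z => decide (z < x)) := by
  conv_rhs => rw [← List.take_append_drop (j + 1) B]
  rw [List.countP_append]
  have htake : (B.take (j + 1)).countP (fun z => decide (z < x)) = j + 1 := by
    have hlen : (B.take (j + 1)).length = j + 1 := by
      rw [List.length_take]
      omega
    have hall : ∀ z ∈ B.take (j + 1), (fun z => decide (z < x)) z = true := by
      intro z hz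
      have := sorted_take_le hB hj z hz
      simp only [decide_eq_true_eq]
      omega
    exact (List.countP_eq_length.mpr hall).trans hlen
  omega

lemma count_le_of_sorted {B : List ℤ} (hB : B.Pairwise (· < ·)) {j : ℕ} {x : ℤ}
    (h : j + 1 ≤ B.countP (fun z => decide (z < x))) : j < B.length ∧ B.getD j 0 < x := by
  have hlen : j < B.length := by
    have := List.countP_le_length (p := fun z => decide (z < x)) (l := B)
    omega
  refine ⟨hlen, ?_⟩
  by_contra hge
  push_neg at hge
  have hdrop : (B.drop j).countP (fun z => decide (z < x)) = 0 := by
    apply List.countP_eq_zero.mpr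
    intro z hz
    obtain ⟨i, hi, hzi⟩ := List.mem_iff_getElem.mp hz
    have hlen2 : j + i < B.length := by
      simp only [List.length_drop] at hi
      omega
    have he : (B.drop j)[i]'hi = B[j + i]'hlen2 := by
      rw [List.getElem_drop]
    have hmono : B[j]'hlen ≤ B[j + i]'hlen2 := sorted_getElem_le hB (by omega) hlen2
    rw [List.getD_eq_getElem B 0 hlen] at hge
    simp only [decide_eq_true_eq]
    omega
  have hsum : B.countP (fun z => decide (z < x))
      = (B.take j).countP (fun z => decide (z < x)) + (B.drop j).countP (fun z => decide (z < x)) := by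
    conv_lhs => rw [← List.take_append_drop j B]
    rw [List.countP_append]
  have htk : (B.take j).countP (fun z => decide (z < x)) ≤ j := by
    have h2 := List.countP_le_length (p := fun z => decide (z < x)) (l := B.take j)
    have h3 : (B.take j).length ≤ j := by
      rw [List.length_take]
      omega
    omega
  omega

/-! ### The pairing fold -/

def pzstep (st : List (ℤ × ℤ) × List ℤ) (c : ℤ) : List (ℤ × ℤ) × List ℤ :=
  match findPairZ c st.2 with
  | (none, r) => (st.1, r)
  | (some b, r) => ((b, c) :: st.1, r)

lemma pairFoldZ_eq (u vrev : List ℤ) : pairFoldZ u vrev = vrev.foldl pzstep ([], u) := rfl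

lemma findPairZ_cases (c : ℤ) : ∀ (L : List ℤ),
    (findPairZ c L = (none, L) ∧ ∀ b ∈ L, ¬ b < c) ∨
    ∃ b L1 L2, L = L1 ++ b :: L2 ∧ b < c ∧ findPairZ c L = (some b, L1 ++ L2) := by
  intro L
  induction L with
  | nil => left; exact ⟨rfl, by simp⟩
  | cons b0 L' ih =>
    by_cases hb : b0 < c
    · right
      exact ⟨b0, [], L', by simp, hb, by simp [findPairZ, hb]⟩
    · rcases ih with ⟨hf, hall⟩ | ⟨b, L1, L2, hsplit, hblt, hf⟩
      · left
        constructor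
        · simp [findPairZ, hb, hf]
        · intro z hz
          rcases List.mem_cons.mp hz with rfl | hz
          · exact hb
          · exact hall z hz
      · right
        exact ⟨b, b0 :: L1, L2, by simp [hsplit], hblt, by simp [findPairZ, hb, hf]⟩

lemma fold_pairs_sub : ∀ (C : List ℤ) (st : List (ℤ × ℤ) × List ℤ) (p : ℤ × ℤ),
    p ∈ st.1 → p ∈ (C.foldl pzstep st).1 := by
  intro C
  induction C with
  | nil => intro st p hp; exact hp
  | cons c0 C' ih =>
    intro st p hp
    rw [List.foldl_cons]
    apply ih
    unfold pzstep
    rcases hf : findPairZ c0 st.2 with ⟨o, r⟩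
    cases o <;> simp [hf, hp]

lemma fold_complete : ∀ (C : List ℤ) (st : List (ℤ × ℤ) × List ℤ),
    (∀ j, j < C.length → j + 1 ≤ st.2.countP (fun z => decide (z < C.getD j 0))) →
    ∀ c ∈ C, c ∈ (C.foldl pzstep st).1.map Prod.snd := by
  intro C
  induction C with
  | nil => intro st _ c hc; simp at hc
  | cons c0 C' ih =>
    intro st hcount c hc
    have h0 : 1 ≤ st.2.countP (fun z => decide (z < c0)) := by
      have := hcount 0 (by simp)
      simpa using this
    rcases findPairZ_cases c0 st.2 with ⟨hf, hall⟩ | ⟨b, L1, L2, hsplit, hblt, hf⟩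
    · exfalso
      have hz : st.2.countP (fun z => decide (z < c0)) = 0 := by
        apply List.countP_eq_zero.mpr
        intro z hz
        simpa using hall z hz
      omega
    · have hstep : pzstep st c0 = ((b, c0) :: st.1, L1 ++ L2) := by
        unfold pzstep
        rw [hf]
      rw [List.foldl_cons, hstep]
      rcases List.mem_cons.mp hc with rfl | hc'
      · have : (b, c) ∈ (C'.foldl pzstep ((b, c) :: st.1, L1 ++ L2)).1 :=
          fold_pairs_sub C' _ _ (by simp)
        exact List.mem_map.mpr ⟨(b, c), this, rfl⟩
      · apply ih ((b, c0) :: st.1, L1 ++ L2) ?_ c hc'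
        intro j hj
        show j + 1 ≤ (L1 ++ L2).countP (fun z => decide (z < C'.getD j 0))
        have hold := hcount (j + 1) (by simp; omega)
        have e1 : (c0 :: C').getD (j + 1) 0 = C'.getD j 0 := by simp
        rw [e1] at hold
        have e2 : st.2.countP (fun z => decide (z < C'.getD j 0))
            ≤ (L1 ++ L2).countP (fun z => decide (z < C'.getD j 0)) + 1 := by
          rw [hsplit, List.countP_append, List.countP_cons, List.countP_append]
          split <;> omega
        omega

lemma fold_inv : ∀ (C : List ℤ) (st : List (ℤ × ℤ) × List ℤ),
    (∀ pr ∈ (C.foldl pzstep st).1, pr ∈ st.1 ∨ pr.1 < pr.2) ∧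
    (∀ x : ℤ, ((C.foldl pzstep st).1.map Prod.fst).countP (fun z => decide (z < x))
        + (C.foldl pzstep st).2.countP (fun z => decide (z < x))
        = (st.1.map Prod.fst).countP (fun z => decide (z < x))
          + st.2.countP (fun z => decide (z < x))) ∧
    (∀ x : ℤ, ((C.foldl pzstep st).1.map Prod.snd).countP (fun z => decide (z ≤ x))
        ≤ (st.1.map Prod.snd).countP (fun z => decide (z ≤ x))
          + C.countP (fun z => decide (z ≤ x))) := by
  intro C
  induction C with
  | nil =>
    intro st
    exact ⟨fun pr hpr => Or.inl hpr, fun x => rfl, fun x => by simp⟩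
  | cons c0 C' ih =>
    intro st
    rcases findPairZ_cases c0 st.2 with ⟨hf, -⟩ | ⟨b, L1, L2, hsplit, hblt, hf⟩
    · have hstep : pzstep st c0 = st := by
        unfold pzstep
        rw [hf]
      obtain ⟨I1, I2, I3⟩ := ih st
      rw [List.foldl_cons, hstep]
      refine ⟨I1, I2, ?_⟩
      intro x
      have h3 := I3 x
      rw [List.countP_cons]
      omega
    · have hstep : pzstep st c0 = ((b, c0) :: st.1, L1 ++ L2) := by
        unfold pzstep
        rw [hf]
      obtain ⟨I1, I2, I3⟩ := ih ((b, c0) :: st.1, L1 ++ L2)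
      dsimp only at I1 I2 I3
      rw [List.foldl_cons, hstep]
      refine ⟨?_, ?_, ?_⟩
      · intro pr hpr
        rcases I1 pr hpr with hm | hlt
        · rcases List.mem_cons.mp hm with rfl | hm'
          · exact Or.inr hblt
          · exact Or.inl hm'
        · exact Or.inr hlt
      · intro x
        have h2 := I2 x
        rw [List.map_cons] at h2
        dsimp only at h2
        rw [List.countP_cons, List.countP_append] at h2
        rw [hsplit, List.countP_append, List.countP_cons]
        omega
      · intro x
        have h3 := I3 x
        rw [List.map_cons] at h3
        dsimp only at h3
        rw [List.countP_cons] at h3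
        rw [List.countP_cons]
        omega

/-! ### The two main pairing results -/

lemma estep_none_of_incr {B C : List ℤ} (hB : B.Pairwise (· < ·)) (hC : C.Pairwise (· < ·))
    (hlen : C.length ≤ B.length)
    (hcol : ∀ j, j < C.length → B.getD j 0 < C.getD j 0) :
    eStepZ B.reverse C.reverse = none := by
  have hpz : pairsZ B.reverse C.reverse = (C.foldl pzstep ([], B.reverse)).1 := by
    rw [pairsZ, List.reverse_reverse, pairFoldZ_eq]
  have hfilter : ∀ c ∈ C, c ∈ (pairsZ B.reverse C.reverse).map Prod.snd := by
    intro c hc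
    rw [hpz]
    apply fold_complete C ([], B.reverse) ?_ c hc
    intro j hj
    have h1 : j < B.length := lt_of_lt_of_le hj hlen
    have h2 : (B.reverse).countP (fun z => decide (z < C.getD j 0))
        = B.countP (fun z => decide (z < C.getD j 0)) :=
      List.countP_reverse (p := fun z => decide (z < C.getD j 0)) (l := B)
    have h3 := sorted_count_ge hB h1 (hcol j hj)
    simpa [h2] using h3
  have hfe : (C.reverse).filter
      (fun c => decide (c ∉ (pairsZ B.reverse C.reverse).map Prod.snd)) = [] := by
    apply List.filter_eq_nil_iff.mpr
    intro c hc
    simpa using hfilter c (List.mem_reverse.mp hc)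
  rw [eStepZ, hfe]

lemma pairing_col {B C : List ℤ} (hB : B.Pairwise (· < ·)) (hC : C.Pairwise (· < ·))
    (hfilter : ∀ c ∈ C, c ∈ (pairsZ B.reverse C.reverse).map Prod.snd) :
    C.length ≤ B.length ∧ ∀ j, j < C.length → B.getD j 0 < C.getD j 0 := by
  have hpz : pairsZ B.reverse C.reverse = (C.foldl pzstep ([], B.reverse)).1 := by
    rw [pairsZ, List.reverse_reverse, pairFoldZ_eq]
  obtain ⟨I1, I2, I3⟩ := fold_inv C ([], B.reverse)
  have key : ∀ j, j < C.length → j + 1 ≤ B.countP (fun z => decide (z < C.getD j 0)) := by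
    intro j hj
    set cj := C.getD j 0 with hcj
    set P := (C.foldl pzstep ([], B.reverse)).1 with hPdef
    have hsub : C.take (j + 1) ⊆ P.map Prod.snd := by
      intro z hz
      have := hfilter z (List.mem_of_mem_take hz)
      rwa [hpz] at this
    have hnd : (C.take (j + 1)).Nodup := (List.take_sublist _ _).nodup hC.nodup
    have hsp : C.take (j + 1) <+~ P.map Prod.snd := List.subperm_of_subset hnd hsub
    have htake : (C.take (j + 1)).countP (fun z => decide (z ≤ cj)) = j + 1 := by
      have hlen2 : (C.take (j + 1)).length = j + 1 := by
        rw [List.length_take]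
        omega
      have hall : ∀ z ∈ C.take (j + 1), (fun z => decide (z ≤ cj)) z = true := by
        intro z hz
        simp only [decide_eq_true_eq]
        exact sorted_take_le hC hj z hz
      exact (List.countP_eq_length.mpr hall).trans hlen2
    have h1 : j + 1 ≤ (P.map Prod.snd).countP (fun z => decide (z ≤ cj)) := by
      have := hsp.countP_le (fun z => decide (z ≤ cj))
      omega
    have h2 : (P.map Prod.snd).countP (fun z => decide (z ≤ cj))
        ≤ (P.map Prod.fst).countP (fun z => decide (z < cj)) := by
      rw [List.countP_map, List.countP_map]
      apply List.countP_mono_left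
      intro pr hpr hle
      rcases I1 pr hpr with hm | hlt
      · simp at hm
      · simp only [Function.comp_apply, decide_eq_true_eq] at hle ⊢
        omega
    have h3 : (P.map Prod.fst).countP (fun z => decide (z < cj))
        ≤ B.countP (fun z => decide (z < cj)) := by
      have h4 := I2 cj
      dsimp only at h4
      have h6 : (B.reverse).countP (fun z => decide (z < cj))
          = B.countP (fun z => decide (z < cj)) :=
        List.countP_reverse (p := fun z => decide (z < cj)) (l := B)
      simp only [List.map_nil, List.countP_nil] at h4
      omega
    omega
  constructor
  · cases hC0 : C with
    | nil => simp
    | cons c0 C' =>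
      have := key (C.length - 1) (by rw [hC0]; simp)
      have h2 := List.countP_le_length (p := fun z => decide (z < C.getD (C.length - 1) 0)) (l := B)
      rw [hC0] at *
      simp only [List.length_cons] at *
      omega
  · intro j hj
    exact (count_le_of_sorted hB (key j hj)).2

end EGaux

namespace EGaux

open List

/-! ### Final assembly helpers -/

lemma zdec_reverse {l : List ℤ} (h : l.Pairwise (· < ·)) : ZDec l.reverse :=
  List.pairwise_reverse.mpr h

lemma sorted_of_zdec {l : List ℤ} (h : ZDec l) : l.reverse.Pairwise (· < ·) :=
  List.pairwise_reverse.mpr h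

lemma getD_sorted {T : List (List ℤ)} (hT : IncrTab T) (m : ℕ) :
    (T.getD m []).Pairwise (· < ·) := by
  by_cases hm : m < T.length
  · rw [List.getD_eq_getElem _ _ hm]
    exact hT.2.1 _ (List.getElem_mem hm)
  · rw [List.getD_eq_default _ _ (by omega)]
    simp

lemma revrow_eq_flatten_map : ∀ (T : List (List ℤ)), revrow T = (T.map List.reverse).flatten := by
  intro T
  induction T with
  | nil => rfl
  | cons r Q ih =>
    have e1 : revrow (r :: Q) = r.reverse ++ revrow Q := by
      simp only [revrow, rowword_cons, List.reverse_append]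
    rw [e1, ih]
    simp

lemma flatten_map_range_support (f : ℕ → List ℤ) : ∀ (n k : ℕ), k ≤ n →
    (∀ m, k ≤ m → f m = []) → ((List.range n).map f).flatten = ((List.range k).map f).flatten := by
  intro n
  induction n with
  | zero => intro k hk _; have : k = 0 := by omega
            rw [this]
  | succ n ih =>
    intro k hk hf
    by_cases hkn : k = n + 1
    · rw [hkn]
    · have hk' : k ≤ n := by omega
      rw [List.range_succ, List.map_append, List.flatten_append]
      simp only [List.map_cons, List.map_nil, List.flatten_cons, List.flatten_nil,
        List.append_nil]
      rw [hf n (by omega)]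
      simp [ih k hk' hf]

lemma range_map_getD (T : List (List ℤ)) (g : List ℤ → List ℤ) :
    (List.range T.length).map (fun m => g (T.getD m [])) = T.map g := by
  apply List.ext_getElem
  · simp
  · intro i h1 h2
    simp only [List.getElem_map, List.getElem_range]
    congr 1
    exact List.getD_eq_getElem _ _ (by simpa using h2)

lemma rev_flatten : ∀ (L : List (List ℤ)),
    L.flatten.reverse = ((L.map List.reverse).reverse).flatten := by
  intro L
  induction L with
  | nil => rfl
  | cons r L ih =>
    simp only [List.flatten_cons, List.reverse_append, ih, List.map_cons, List.reverse_cons]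
    simp

lemma estep_none_filter {u v : List ℤ} (h : eStepZ u v = none) :
    ∀ c ∈ v, c ∈ (pairsZ u v).map Prod.snd := by
  rcases hf : v.filter (fun c => decide (c ∉ (pairsZ u v).map Prod.snd)) with _ | ⟨x, t⟩
  · intro c hc
    by_contra hmem
    have : c ∈ v.filter (fun c => decide (c ∉ (pairsZ u v).map Prod.snd)) :=
      List.mem_filter.mpr ⟨hc, by simpa using hmem⟩
    rw [hf] at this
    simp at this
  · exfalso
    rw [eStepZ, hf] at h
    simp at h

lemma fold_empty (P0 : List (ℤ × ℤ)) : ∀ (C : List ℤ), C.foldl pzstep (P0, []) = (P0, []) := by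
  intro C
  induction C with
  | nil => rfl
  | cons c C' ih =>
    rw [List.foldl_cons]
    have : pzstep (P0, []) c = (P0, []) := rfl
    rw [this, ih]

lemma estep_nil {v : List ℤ} (h : eStepZ [] v = none) : v = [] := by
  have hp : pairsZ [] v = [] := by
    rw [pairsZ, pairFoldZ_eq]
    rw [fold_empty]
  rcases hv : v with _ | ⟨x, t⟩
  · rfl
  · exfalso
    rw [hv] at h hp
    rw [eStepZ] at h
    rw [hp] at h
    simp at h

end EGaux

/- **Statement 4.**  For an increasing tableau `T` with at most `n` rows and
`revrow(T) ∈ R(w)`, the factorization whose `i`-th factor is the reversal of row `i` of `T`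
belongs to `RF_n(T)` and is its unique element killed by all raising operators `e_i`,
`i ∈ {1, …, n-1}`. -/
open EGaux in
/-- For an increasing tableau `T` with at most `n` rows and
`revrow(T) ∈ R(w)`, the factorization whose `i`-th factor is the reversal of row `i` of `T`
belongs to `RF_n(T)` and is its unique element killed by all raising operators `e_i`,
`i ∈ {1, …, n-1}`. -/
theorem highest_weight_of_RFnT (n : ℕ) (hn : 0 < n) (w : Equiv.Perm ℤ) (hw : w ∈ SZSet)
    (T : List (List ℤ)) (hT : IncrTab T) (hrows : T.length ≤ n)
    (hred : IsReducedWord w (revrow T)) :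
    (fun m => (T.getD m []).reverse) ∈ RFZnTincr n w T ∧
    (∀ i : ℕ, i + 1 < n → eZ i (fun m => (T.getD m []).reverse) = none) ∧
    (∀ a ∈ RFZnTincr n w T, (∀ i : ℕ, i + 1 < n → eZ i a = none) →
      a = fun m => (T.getD m []).reverse) := by
  classical
  have hconc : concatZ (fun m => (T.getD m []).reverse) n = revrow T := by
    show ((List.range n).map (fun m => (T.getD m []).reverse)).flatten = revrow T
    rw [flatten_map_range_support _ n T.length hrows
      (fun m hm => by rw [List.getD_eq_default _ _ hm]; rfl)]
    rw [range_map_getD T List.reverse]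
    exact (revrow_eq_flatten_map T).symm
  refine ⟨⟨⟨?_, ?_, ?_⟩, ?_⟩, ?_, ?_⟩
  · intro i
    exact zdec_reverse (getD_sorted hT i)
  · intro m hm
    show (T.getD m []).reverse = []
    rw [List.getD_eq_default _ _ (le_trans hrows hm)]
    rfl
  · rw [hconc]
    exact hred
  · rw [hconc]
    exact Relation.EqvGen.refl _
  · -- highest weight property of the row factorization
    intro i hi
    have hstep : eStepZ ((T.getD i []).reverse) ((T.getD (i + 1) []).reverse) = none := by
      apply estep_none_of_incr (getD_sorted hT i) (getD_sorted hT (i + 1))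
      · by_cases h2 : i + 1 < T.length
        · exact hT.1.2 i h2
        · rw [List.getD_eq_default _ _ (by omega : T.length ≤ i + 1)]
          simp
      · intro j hj
        by_cases h2 : i + 1 < T.length
        · exact hT.2.2 i j h2 hj
        · rw [List.getD_eq_default _ _ (by omega : T.length ≤ i + 1)] at hj
          simp at hj
    simp only [eZ, applyAtZ]
    rw [hstep]
    rfl
  · -- uniqueness
    rintro a ⟨⟨hdec, hempty, hredc⟩, hck⟩ he
    have hestep : ∀ i, i + 1 < n → eStepZ (a i) (a (i + 1)) = none := by
      intro i hi
      have h := he i hi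
      simp only [eZ, applyAtZ] at h
      exact Option.map_eq_none_iff.mp h
    have hex : ∃ m, a m = [] := ⟨n, hempty n le_rfl⟩
    set k := Nat.find hex with hkdef
    have hka : a k = [] := Nat.find_spec hex
    have hlt : ∀ m, m < k → a m ≠ [] := fun m hm => Nat.find_min hex hm
    have hkn : k ≤ n := Nat.find_le (hempty n le_rfl)
    have hall : ∀ m, k ≤ m → a m = [] := by
      intro m
      induction m with
      | zero =>
        intro h0
        have hk0 : k = 0 := by omega
        rw [← hk0]
        exact hka
      | succ m ih =>
        intro hm
        by_cases hmk : k = m + 1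
        · rw [← hmk]
          exact hka
        · have ham : a m = [] := ih (by omega)
          by_cases hmn : m + 1 < n
          · have h := hestep m hmn
            rw [ham] at h
            exact estep_nil h
          · exact hempty (m + 1) (by omega)
    have hcols : ∀ i, i + 1 < k →
        ((a (i + 1)).reverse.length ≤ (a i).reverse.length ∧
         ∀ j, j < (a (i + 1)).reverse.length →
           (a i).reverse.getD j 0 < (a (i + 1)).reverse.getD j 0) := by
      intro i hi
      have hi' : i + 1 < n := by omega
      have h := hestep i hi'
      have hf := estep_none_filter h
      have hBs : (a i).reverse.Pairwise (· < ·) := sorted_of_zdec (hdec i)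
      have hCs : (a (i + 1)).reverse.Pairwise (· < ·) := sorted_of_zdec (hdec (i + 1))
      have hf' : ∀ c ∈ (a (i + 1)).reverse,
          c ∈ (pairsZ ((a i).reverse).reverse ((a (i + 1)).reverse).reverse).map Prod.snd := by
        intro c hc
        rw [List.reverse_reverse, List.reverse_reverse]
        exact hf c (List.mem_reverse.mp hc)
      exact pairing_col hBs hCs hf'
    set T' : List (List ℤ) := (List.range k).map (fun m => (a m).reverse) with hT'def
    have hT'len : T'.length = k := by simp [hT'def]
    have hT'getD : ∀ m, m < k → T'.getD m [] = (a m).reverse := by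
      intro m hm
      rw [List.getD_eq_getElem _ _ (by rw [hT'len]; exact hm)]
      simp [hT'def]
    have hT'incr : IncrTab T' := by
      refine ⟨⟨?_, ?_⟩, ?_, ?_⟩
      · intro r hr
        rw [hT'def] at hr
        obtain ⟨m, hm, rfl⟩ := List.mem_map.mp hr
        have hmk : m < k := List.mem_range.mp hm
        intro h0
        exact hlt m hmk (by simpa using h0)
      · intro i hi
        rw [hT'len] at hi
        rw [hT'getD i (by omega), hT'getD (i + 1) hi]
        exact (hcols i hi).1
      · intro r hr
        rw [hT'def] at hr
        obtain ⟨m, hm, rfl⟩ := List.mem_map.mp hr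
        exact sorted_of_zdec (hdec m)
      · intro i j hi hj
        rw [hT'len] at hi
        rw [hT'getD (i + 1) hi] at hj
        simp only [entryOf]
        rw [hT'getD i (by omega), hT'getD (i + 1) hi]
        exact (hcols i hi).2 j hj
    have hconc2 : concatZ a n = ((List.range k).map a).flatten := by
      show ((List.range n).map a).flatten = _
      exact flatten_map_range_support a n k hkn hall
    have hword : rowword T' = (concatZ a n).reverse := by
      rw [hconc2, rev_flatten]
      show (T'.reverse).flatten = _
      congr 1
      rw [hT'def, List.map_map]
      rfl
    have hred1 : Red (concatZ a n) := red_of_isReducedWord hredc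
    have hredT' : Red (rowword T') := by
      rw [hword]
      exact red_reverse hred1
    have hckrev : CKEquiv (rowword T') (rowword T) := by
      have h := ckeq_reverse hck
      rw [show (revrow T).reverse = rowword T from by rw [revrow, List.reverse_reverse]] at h
      rw [hword]
      exact h
    have hTT : T' = T := by
      have h1 : insW [] (rowword T') = T' := insW_rowword hT'incr
      have h2 : insW [] (rowword T) = T := insW_rowword hT
      have h3 := pinv hckrev hredT'
      rw [h1, h2] at h3
      exact h3
    funext m
    by_cases hm : m < k
    · have hgd := hT'getD m hm
      rw [hTT] at hgd
      rw [hgd, List.reverse_reverse]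
    · have h1 : a m = [] := hall m (by omega)
      have h2 : T.getD m [] = [] := by
        have hTlen : T.length = k := by
          rw [← hTT]
          exact hT'len
        rw [List.getD_eq_default _ _ (by omega)]
      rw [h1, h2]
      rfl
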